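/- arXiv:math/0611167 — 6 statements merged into one kernel-verified Lean document; each statement's English description precedes it below -/
import Mathlib

section
/- Let K be a field and let A be an n×n anti-symmetric matrix with entries in K. Then the rank of A is even. -/
open Matrix FiniteDimensional

section auxlemmas
variable {K : Type*} [Field K]

private lemma range_prodMap' {M M' N N' : Type*} [AddCommGroup M] [AddCommGroup M'] [AddCommGroup N]
    [AddCommGroup N'] [Module K M] [Module K M'] [Module K N] [Module K N']
    (f : M →ₗ[K] M') (g : N →ₗ[K] N') :
    LinearMap.range (f.prodMap g) = (LinearMap.range f).prod (LinearMap.range g) := by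
  ext ⟨a, b⟩
  simp only [LinearMap.mem_range, Submodule.mem_prod, Prod.ext_iff]
  constructor
  · rintro ⟨⟨x, y⟩, hx, hy⟩
    exact ⟨⟨x, hx⟩, ⟨y, hy⟩⟩
  · rintro ⟨⟨x, hx⟩, ⟨y, hy⟩⟩
    exact ⟨(x, y), hx, hy⟩

private noncomputable def prodSubmodEquiv {V W : Type*} [AddCommGroup V] [AddCommGroup W]
    [Module K V] [Module K W] (p : Submodule K V) (q : Submodule K W) :
    (p.prod q) ≃ₗ[K] p × q where
  toFun x := (⟨x.val.1, x.prop.1⟩, ⟨x.val.2, x.prop.2⟩)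
  invFun x := ⟨(x.1.val, x.2.val), ⟨x.1.prop, x.2.prop⟩⟩
  map_add' := fun _ _ => rfl
  map_smul' := fun _ _ => rfl
  left_inv := fun _ => rfl
  right_inv := fun _ => rfl

private lemma rank_fromBlocks_diag {m n : Type*} [Fintype m] [Fintype n] [DecidableEq m]
    [DecidableEq n] (B : Matrix m m K) (D : Matrix n n K) :
    (Matrix.fromBlocks B 0 0 D).rank = B.rank + D.rank := by
  classical
  let e := LinearEquiv.sumArrowLequivProdArrow m n K K
  have hf : (Matrix.fromBlocks B 0 0 D).mulVecLin
      = e.symm.toLinearMap ∘ₗ ((B.mulVecLin.prodMap D.mulVecLin) ∘ₗ e.toLinearMap) := by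
    apply LinearMap.ext
    intro x
    funext s
    cases s <;>
      simp [e, Matrix.fromBlocks_mulVec, LinearEquiv.sumArrowLequivProdArrow,
        Matrix.mulVecLin_apply, Equiv.sumArrowEquivProdArrow]
  rw [Matrix.rank, hf, LinearMap.range_comp,
    LinearMap.range_comp_of_range_eq_top _ (LinearMap.range_eq_top.mpr e.surjective),
    LinearEquiv.finrank_map_eq, range_prodMap',
    (prodSubmodEquiv _ _).finrank_eq, Module.finrank_prod]
  rfl

private def splitEquiv {m : Type*} [DecidableEq m] (i j : m) (hij : i ≠ j) :
    (Fin 2 ⊕ {x : m // x ≠ i ∧ x ≠ j}) ≃ m where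
  toFun := Sum.elim (fun k => if k = 0 then i else j) Subtype.val
  invFun x :=
    if h1 : x = i then Sum.inl 0
    else if h2 : x = j then Sum.inl 1 else Sum.inr ⟨x, h1, h2⟩
  left_inv s := by
    rcases s with k | ⟨x, hx1, hx2⟩
    · fin_cases k <;> simp [hij, hij.symm]
    · simp [hx1, hx2]
  right_inv x := by
    by_cases h1 : x = i
    · simp [h1]
    · by_cases h2 : x = j <;> simp [h1, h2, Ne.symm hij]

private theorem rank_even_aux (N : ℕ) : ∀ (m : Type) [Fintype m] [DecidableEq m]
    (A : Matrix m m K), Fintype.card m ≤ N → (∀ i, A i i = 0) →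
    (∀ i j, A i j + A j i = 0) → Even A.rank := by
  induction N with
  | zero =>
    intro m _ _ A hcard _ _
    have : A.rank = 0 := le_antisymm (le_trans (A.rank_le_card_width) (by simpa using hcard))
      (Nat.zero_le _)
    simp [this]
  | succ N ih =>
    intro m _ _ A hcard hdiag hskew
    by_cases hA : A = 0
    · simp [hA]
    · obtain ⟨i, j, hij0⟩ : ∃ i j, A i j ≠ 0 := by
        by_contra h
        push_neg at h
        exact hA (by ext i j; simp [h i j])
      have hij : i ≠ j := by rintro rfl; exact hij0 (hdiag i)
      have hsk : ∀ x y : m, A x y = - A y x := fun x y =>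
        eq_neg_of_add_eq_zero_left (hskew x y)
      set a := A i j with ha
      let e := splitEquiv i j hij
      have he0 : e (Sum.inl 0) = i := rfl
      have he1 : e (Sum.inl 1) = j := rfl
      let M := A.submatrix e e
      have hrank : M.rank = A.rank := Matrix.rank_submatrix A e e
      rw [← hrank]
      set B := M.toBlocks₁₁ with hB
      set C := M.toBlocks₁₂ with hC
      set D := M.toBlocks₂₁ with hD
      set E := M.toBlocks₂₂ with hE
      have hM : M = Matrix.fromBlocks B C D E := (Matrix.fromBlocks_toBlocks M).symm
      have hBval : B = !![0, a; -a, 0] := by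
        ext x y
        fin_cases x <;> fin_cases y
        · show A (e (Sum.inl 0)) (e (Sum.inl 0)) = !![0, a; -a, 0] 0 0
          rw [he0]; simp [hdiag]
        · show A (e (Sum.inl 0)) (e (Sum.inl 1)) = !![0, a; -a, 0] 0 1
          rw [he0, he1]; simp [ha]
        · show A (e (Sum.inl 1)) (e (Sum.inl 0)) = !![0, a; -a, 0] 1 0
          rw [he1, he0]; simp [hsk j i, ha]
        · show A (e (Sum.inl 1)) (e (Sum.inl 1)) = !![0, a; -a, 0] 1 1
          rw [he1]; simp [hdiag]
      set Binv : Matrix (Fin 2) (Fin 2) K := !![0, -a⁻¹; a⁻¹, 0] with hBinv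
      have h1 : Binv * B = 1 := by
        rw [hBval]
        ext x y
        fin_cases x <;> fin_cases y <;>
          simp [hBinv, Matrix.mul_apply, Fin.sum_univ_two, inv_mul_cancel₀ hij0]
      have h2 : B * Binv = 1 := by
        rw [hBval]
        ext x y
        fin_cases x <;> fin_cases y <;>
          simp [hBinv, Matrix.mul_apply, Fin.sum_univ_two, mul_inv_cancel₀ hij0]
      letI : Invertible B := ⟨Binv, h1, h2⟩
      have hdecomp := Matrix.fromBlocks_eq_of_invertible₁₁ B C D E
      set S := E - D * ⅟B * C with hS
      have hinvOf : (⅟B : Matrix (Fin 2) (Fin 2) K) = Binv := rfl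
      have hdetL : IsUnit (Matrix.fromBlocks (1 : Matrix (Fin 2) (Fin 2) K) 0 (D * ⅟B) 1).det := by
        rw [Matrix.det_fromBlocks_zero₁₂]
        simp
      have hdetU : IsUnit (Matrix.fromBlocks (1 : Matrix (Fin 2) (Fin 2) K) (⅟B * C) 0 1).det := by
        rw [Matrix.det_fromBlocks_zero₂₁]
        simp
      have hrk : M.rank = (Matrix.fromBlocks B 0 0 S).rank := by
        rw [hM, hdecomp, Matrix.rank_mul_eq_left_of_isUnit_det _ _ hdetU,
          Matrix.rank_mul_eq_right_of_isUnit_det _ _ hdetL]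
      rw [hrk, rank_fromBlocks_diag]
      have hrkB : B.rank = 2 := by
        rw [Matrix.rank_of_isUnit B (isUnit_of_invertible B)]
        simp
      rw [hrkB]
      have hDC : ∀ (x : {x : m // x ≠ i ∧ x ≠ j}) (k : Fin 2), C k x = - D x k := by
        intro x k
        show A (e (Sum.inl k)) (e (Sum.inr x)) = - A (e (Sum.inr x)) (e (Sum.inl k))
        exact hsk _ _
      have hSentry : ∀ x y, (D * ⅟B * C) x y
          = -a⁻¹ * (D x 1 * D y 0 - D x 0 * D y 1) := by
        intro x y
        rw [hinvOf]
        simp [Matrix.mul_apply, Fin.sum_univ_two, hBinv, hDC]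
        ring
      have hSdiag : ∀ x, S x x = 0 := by
        intro x
        have hExx : E x x = 0 := hdiag x.val
        rw [hS, Matrix.sub_apply, hSentry, hExx]
        ring
      have hSskew : ∀ x y, S x y + S y x = 0 := by
        intro x y
        have hExy : E x y + E y x = 0 := hskew x.val y.val
        rw [hS]
        simp only [Matrix.sub_apply, hSentry]
        linear_combination hExy
      have hcm : 2 + Fintype.card {x : m // x ≠ i ∧ x ≠ j} = Fintype.card m := by
        simpa [Fintype.card_sum] using Fintype.card_congr e
      have hle : Fintype.card {x : m // x ≠ i ∧ x ≠ j} ≤ N := by omega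
      exact even_two.add (ih _ S hle hSdiag hSskew)

end auxlemmas

/-- An `n × n` matrix `A` over a commutative ring is *anti-symmetric* if
`A i i = 0` for all `i` and `A i j + A j i = 0` for all `i, j`.
The rank of an anti-symmetric matrix over a field is even. -/
theorem rank_even_of_antisymmetric {K : Type*} [Field K] {n : ℕ}
    (A : Matrix (Fin n) (Fin n) K)
    (hdiag : ∀ i, A i i = 0)
    (hskew : ∀ i j, A i j + A j i = 0) :
    Even A.rank :=
  rank_even_aux n (Fin n) A (by simp) hdiag hskew
end

section
/- Let n be even and let A be an n×n anti-symmetric matrix with entries in a commutative ring R. Then det A is a square in R, i.e., there exists f ∈ R with det A = f². -/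
open Matrix

set_option maxHeartbeats 1000000 in
/-- Over a char-zero field, the determinant of a skew-symmetric `2k × 2k` matrix is a square. -/
private theorem det_skew_field {K : Type*} [Field K] [CharZero K] :
    ∀ k : ℕ, ∀ A : Matrix (Fin (2 * k)) (Fin (2 * k)) K, Aᵀ = -A → ∃ f : K, A.det = f ^ 2 := by
  intro k
  induction k with
  | zero =>
      intro A hA
      exact ⟨1, by simp [Matrix.det_isEmpty]⟩
  | succ k ih =>
      intro A hA
      have hskew : ∀ i j, A j i = - A i j := by
        intro i j
        have := congrFun (congrFun hA i) j
        simpa [Matrix.transpose_apply] using this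
      have hdiag : ∀ i, A i i = 0 := by
        intro i
        have h := hskew i i
        have h2 : (2 : K) * A i i = 0 := by linear_combination h
        exact (mul_eq_zero.mp h2).resolve_left two_ne_zero
      by_cases hzero : ∀ i j, A i j = 0
      · refine ⟨0, ?_⟩
        have : A = 0 := by ext i j; exact hzero i j
        rw [this]
        have : Nonempty (Fin (2 * (k+1))) := ⟨⟨0, by omega⟩⟩
        simp [Matrix.det_zero]
      · push_neg at hzero
        obtain ⟨i, j, hij⟩ := hzero
        have hne : i ≠ j := by rintro rfl; exact hij (hdiag i)
        -- reindexing equivalence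
        set e : Fin 2 ⊕ Fin (2 * k) ≃ Fin (2 * (k + 1)) :=
          finSumFinEquiv.trans (finCongr (by ring)) with he
        have hx : e (Sum.inl 0) ≠ e (Sum.inl 1) := by
          simp [e.injective.ne_iff]
        -- permutation sending e (inl 0) ↦ i, e (inl 1) ↦ j
        set τ : Equiv.Perm (Fin (2 * (k + 1))) := Equiv.swap (e (Sum.inl 0)) i with hτ
        have hj' : τ.symm j ≠ e (Sum.inl 0) := by
          intro h
          apply hne
          have : j = τ (e (Sum.inl 0)) := by rw [← h]; simp
          rw [this, hτ, Equiv.swap_apply_left]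
        set σ : Equiv.Perm (Fin (2 * (k + 1))) := (Equiv.swap (e (Sum.inl 1)) (τ.symm j)).trans τ with hσ
        have hσ0 : σ (e (Sum.inl 0)) = i := by
          rw [hσ]
          simp only [Equiv.trans_apply]
          rw [Equiv.swap_apply_of_ne_of_ne hx hj'.symm]
          exact Equiv.swap_apply_left _ _
        have hσ1 : σ (e (Sum.inl 1)) = j := by
          rw [hσ]
          simp only [Equiv.trans_apply, Equiv.swap_apply_left]
          exact τ.apply_symm_apply j
        -- the reindexed matrix
        set C : Matrix (Fin 2 ⊕ Fin (2 * k)) (Fin 2 ⊕ Fin (2 * k)) K :=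
          (A.submatrix σ σ).submatrix e e with hC
        have hCskew : ∀ p q, C q p = - C p q := by
          intro p q; exact hskew _ _
        have hCdiag : ∀ p, C p p = 0 := by intro p; exact hdiag _
        have hCdet : C.det = A.det := by
          rw [hC, Matrix.det_submatrix_equiv_self, Matrix.det_submatrix_equiv_self]
        set a : K := C (Sum.inl 0) (Sum.inl 1) with ha
        have hane : a ≠ 0 := by
          rw [ha, hC]
          simpa [Matrix.submatrix_apply, hσ0, hσ1] using hij
        -- blocks
        set P := C.toBlocks₁₁ with hP
        set Q := C.toBlocks₁₂ with hQ
        set Rm := C.toBlocks₂₁ with hRm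
        set D := C.toBlocks₂₂ with hD
        have hP00 : P 0 0 = 0 := hCdiag _
        have hP11 : P 1 1 = 0 := hCdiag _
        have hP01 : P 0 1 = a := rfl
        have hP10 : P 1 0 = -a := by
          show C (Sum.inl 1) (Sum.inl 0) = -a
          rw [hCskew (Sum.inl 0) (Sum.inl 1)]
        -- explicit inverse of P
        set J : Matrix (Fin 2) (Fin 2) K := Matrix.of ![![0, -a⁻¹], ![a⁻¹, 0]] with hJ
        have hPJ : P * J = 1 := by
          ext p q
          fin_cases p <;> fin_cases q <;>
            simp [Matrix.mul_apply, Fin.sum_univ_two, hJ, hP00, hP01, hP10, hP11, hane,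
              Matrix.one_apply]
        have hJP : J * P = 1 := by
          ext p q
          fin_cases p <;> fin_cases q <;>
            simp [Matrix.mul_apply, Fin.sum_univ_two, hJ, hP00, hP01, hP10, hP11, hane,
              Matrix.one_apply]
        haveI : Invertible P := ⟨J, hJP, hPJ⟩
        have hinv : ⅟P = J := invOf_eq_right_inv hPJ
        have hdetP : P.det = a ^ 2 := by
          rw [Matrix.det_fin_two, hP00, hP01, hP10, hP11]; ring
        -- block transposes
        have hJT : Jᵀ = -J := by
          ext p q; fin_cases p <;> fin_cases q <;> simp [hJ]
        have hQT : Qᵀ = -Rm := by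
          ext p q; exact hCskew _ _
        have hRT : Rmᵀ = -Q := by
          ext p q; exact hCskew _ _
        have hDT : Dᵀ = -D := by
          ext p q; exact hCskew _ _
        -- Schur complement is skew
        set S : Matrix (Fin (2 * k)) (Fin (2 * k)) K := D - Rm * J * Q with hS
        have hST : Sᵀ = -S := by
          have h1 : (Rm * J * Q)ᵀ = -(Rm * (J * Q)) := by
            rw [Matrix.transpose_mul, Matrix.transpose_mul, hQT, hJT, hRT]
            simp only [Matrix.neg_mul, Matrix.mul_neg, neg_neg]
          rw [hS, Matrix.transpose_sub, hDT, h1, sub_neg_eq_add, neg_sub, Matrix.mul_assoc]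
          abel
        obtain ⟨f, hf⟩ := ih S hST
        refine ⟨a * f, ?_⟩
        have hblocks : Matrix.fromBlocks P Q Rm D = C := Matrix.fromBlocks_toBlocks C
        calc A.det = C.det := hCdet.symm
          _ = (Matrix.fromBlocks P Q Rm D).det := by rw [hblocks]
          _ = P.det * (D - Rm * ⅟P * Q).det := Matrix.det_fromBlocks₁₁ P Q Rm D
          _ = a ^ 2 * f ^ 2 := by rw [hdetP, hinv, ← hS, hf]
          _ = (a * f) ^ 2 := by ring

set_option synthInstance.maxHeartbeats 1000000 in
set_option maxHeartbeats 1000000 in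
private theorem genM_sq (k : ℕ) :
    ∃ p : MvPolynomial (Fin (2 * k) × Fin (2 * k)) ℤ,
      (Matrix.of fun i j => MvPolynomial.X (R := ℤ) (i, j) - MvPolynomial.X (j, i) :
        Matrix (Fin (2 * k)) (Fin (2 * k)) _).det = p ^ 2 := by
  let S := MvPolynomial (Fin (2 * k) × Fin (2 * k)) ℤ
  let M : Matrix (Fin (2 * k)) (Fin (2 * k)) S :=
    Matrix.of fun i j => MvPolynomial.X (i, j) - MvPolynomial.X (j, i)
  show ∃ p : S, M.det = p ^ 2
  let K := FractionRing S
  haveI : CharZero K :=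
    ((algebraMap S K).charZero_iff (IsFractionRing.injective S K)).mp inferInstance
  let M' : Matrix (Fin (2 * k)) (Fin (2 * k)) K := M.map (algebraMap S K)
  have hskewM' : M'ᵀ = -M' := by
    ext i j
    simp only [M', M, Matrix.transpose_apply, Matrix.map_apply, Matrix.neg_apply,
      Matrix.of_apply, ← map_neg]
    congr 1
    rw [← map_neg, neg_sub]
  obtain ⟨g, hg⟩ := det_skew_field k M' hskewM'
  have hdetmap : algebraMap S K M.det = M'.det := by
    have := RingHom.map_det (algebraMap S K) M
    rw [RingHom.mapMatrix_apply] at this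
    exact this
  have hint : IsIntegral S (g ^ 2) := by
    rw [← hg, ← hdetmap]
    exact isIntegral_algebraMap
  obtain ⟨p, hp⟩ := IsIntegrallyClosed.exists_algebraMap_eq_of_isIntegral_pow
    (R := S) (x := g) (n := 2) (by norm_num) hint
  refine ⟨p, IsFractionRing.injective S K ?_⟩
  rw [map_pow, hp, ← hg, hdetmap]

/-- If `n` is even, the determinant of an anti-symmetric `n × n` matrix
(`A i i = 0` and `A i j + A j i = 0`) over a commutative ring `R` is a square in `R`. -/
theorem det_antisymmetric_is_square {R : Type*} [CommRing R] {n : ℕ} (hn : Even n)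
    (A : Matrix (Fin n) (Fin n) R)
    (hdiag : ∀ i, A i i = 0)
    (hskew : ∀ i j, A i j + A j i = 0) :
    ∃ f : R, A.det = f ^ 2 := by
  obtain ⟨k, hk⟩ := hn
  have hk2 : n = 2 * k := by omega
  subst hk2
  obtain ⟨p, hp⟩ := genM_sq k
  let φ : MvPolynomial (Fin (2 * k) × Fin (2 * k)) ℤ →+* R :=
    MvPolynomial.eval₂Hom (Int.castRingHom R) (fun q => if q.1 ≤ q.2 then A q.1 q.2 else 0)
  have hMA : (Matrix.of fun i j => MvPolynomial.X (R := ℤ) (i, j) - MvPolynomial.X (j, i) :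
      Matrix (Fin (2 * k)) (Fin (2 * k)) _).map φ = A := by
    ext i j
    show φ (MvPolynomial.X (i, j) - MvPolynomial.X (j, i)) = A i j
    rw [map_sub]
    rw [show φ (MvPolynomial.X (i, j)) = if i ≤ j then A i j else 0 from
      MvPolynomial.eval₂Hom_X' _ _ _]
    rw [show φ (MvPolynomial.X (j, i)) = if j ≤ i then A j i else 0 from
      MvPolynomial.eval₂Hom_X' _ _ _]
    rcases lt_trichotomy i j with h | h | h
    · rw [if_pos h.le, if_neg (not_le.mpr h), sub_zero]
    · subst h
      simp [hdiag i]
    · rw [if_neg (not_le.mpr h), if_pos h.le, zero_sub]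
      linear_combination -hskew i j
  refine ⟨φ p, ?_⟩
  calc A.det = ((Matrix.of fun i j => MvPolynomial.X (R := ℤ) (i, j) - MvPolynomial.X (j, i) :
        Matrix (Fin (2 * k)) (Fin (2 * k)) _).map φ).det := by rw [hMA]
    _ = φ (Matrix.of fun i j => MvPolynomial.X (R := ℤ) (i, j) - MvPolynomial.X (j, i) :
        Matrix (Fin (2 * k)) (Fin (2 * k)) _).det := by
        have := RingHom.map_det φ (Matrix.of fun i j =>
          MvPolynomial.X (R := ℤ) (i, j) - MvPolynomial.X (j, i))
        rw [RingHom.mapMatrix_apply] at this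
        exact this.symm
    _ = φ (p ^ 2) := by rw [hp]
    _ = (φ p) ^ 2 := map_pow φ p 2
end

section
/- Let k be a field of characteristic 2, let m ≥ 2 and 0 ≤ 2r ≤ 2m−4 be integers, let S = k[x_{ij} : 1 ≤ i < j ≤ 2m] be the polynomial ring, and let A be the 2m×2m matrix over S whose (i,j) entry is x_{ij} if i < j, x_{ij} if i > j (signs are trivial in characteristic 2), and 0 if i = j. Then there is a unique polynomial g ∈ S with g² = det(J_{2r,2m} + A), and the homogeneous components of g of degree 0 and of degree 1 both vanish; equivalently, every monomial occurring in det(J_{2r,2m} + A) has degree at least 4. -/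
/-- The index type for the variables `x_{ij}`, `1 ≤ i < j ≤ 2m`. -/
abbrev PairIdx (m : ℕ) := {p : Fin (2*m) × Fin (2*m) // p.1 < p.2}

/-- `Jmat K r n` is the `n × n` matrix `J_{2r,n}` having `r` copies of the
`2 × 2` block `J₂ = [[0,1],[-1,0]]` placed consecutively along the diagonal
starting from the top-left corner, and all other entries `0`. -/
def Jmat (K : Type*) [CommRing K] (r n : ℕ) : Matrix (Fin n) (Fin n) K :=
  Matrix.of fun i j =>
    if (j : ℕ) = (i : ℕ) + 1 ∧ (i : ℕ) % 2 = 0 ∧ (j : ℕ) < 2 * r then (1 : K)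
    else if (i : ℕ) = (j : ℕ) + 1 ∧ (j : ℕ) % 2 = 0 ∧ (i : ℕ) < 2 * r then -1
    else 0

/-- The generic `2m × 2m` anti-symmetric matrix in characteristic `2`: the `(i,j)`
entry is `x_{ij}` for `i < j`, `x_{ji}` for `i > j` (signs are trivial in
characteristic `2`), and `0` for `i = j`. -/
noncomputable def AmatSym (k : Type*) [Field k] (m : ℕ) :
    Matrix (Fin (2*m)) (Fin (2*m)) (MvPolynomial (PairIdx m) k) :=
  Matrix.of fun i j =>
    if h : i < j then MvPolynomial.X ⟨(i, j), h⟩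
    else if h' : j < i then MvPolynomial.X ⟨(j, i), h'⟩
    else 0

lemma units_int_smul {R : Type*} [Ring R] [CharP R 2] (u : ℤˣ) (x : R) : u • x = x := by
  rcases Int.units_eq_one_or u with h | h <;> subst h <;>
    simp [Units.smul_def, CharTwo.neg_eq]

lemma det_eq_sq {R : Type*} [CommRing R] [CharP R 2] {n : ℕ}
    (M : Matrix (Fin n) (Fin n) R)
    (hsym : ∀ i j, M j i = M i j) (hdiag : ∀ i, M i i = 0) :
    M.det = (∑ σ ∈ Finset.univ.filter
        (fun σ : Equiv.Perm (Fin n) => σ⁻¹ = σ ∧ ∀ i, σ i ≠ i),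
      ∏ i ∈ Finset.univ.filter (fun i => i < σ i), M i (σ i)) ^ 2 := by
  classical
  have hf : ∀ σ : Equiv.Perm (Fin n), ∏ i, M (σ i) i = ∏ i, M i (σ i) := by
    intro σ; exact Finset.prod_congr rfl (fun i _ => hsym i (σ i))
  have hfix : ∀ σ : Equiv.Perm (Fin n), (∃ i, σ i = i) → ∏ i, M i (σ i) = 0 := by
    rintro σ ⟨i, hi⟩
    exact Finset.prod_eq_zero (Finset.mem_univ i) (by rw [hi, hdiag])
  have hinv : ∀ σ : Equiv.Perm (Fin n), ∏ i, M i (σ⁻¹ i) = ∏ i, M i (σ i) := by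
    intro σ
    calc ∏ i, M i (σ⁻¹ i) = ∏ i, M (σ i) (σ⁻¹ (σ i)) :=
          (Equiv.prod_comp σ (fun i => M i (σ⁻¹ i))).symm
    _ = ∏ i, M (σ i) i := by simp
    _ = ∏ i, M i (σ i) := hf σ
  rw [Matrix.det_apply]
  simp_rw [units_int_smul, hf]
  set t := Finset.univ.filter
      (fun σ : Equiv.Perm (Fin n) => σ⁻¹ = σ ∧ ∀ i, σ i ≠ i) with ht
  have hsplit : (Finset.univ : Finset (Equiv.Perm (Fin n))) = t ∪ tᶜ := by
    simp
  rw [hsplit, Finset.sum_union (disjoint_compl_right)]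
  have hzero : ∑ σ ∈ tᶜ, ∏ i, M i (σ i) = 0 := by
    refine Finset.sum_involution (fun σ _ => σ⁻¹) (fun σ hσ => ?_)
      (fun σ hσ hne hc => ?_) (fun σ hσ => ?_) (fun σ _ => by simp)
    · beta_reduce
      have hσ' : σ ∉ t := Finset.mem_compl.mp hσ
      by_cases h : σ⁻¹ = σ
      · have hfp : ∃ i, σ i = i := by
          by_contra hc
          push_neg at hc
          exact hσ' (Finset.mem_filter.mpr ⟨Finset.mem_univ _, h, hc⟩)
        rw [h, hfix σ hfp, add_zero]
      · rw [hinv σ, CharTwo.add_self_eq_zero]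
    · have hσ' : σ ∉ t := Finset.mem_compl.mp hσ
      apply hne
      apply hfix σ
      by_contra h2
      push_neg at h2
      exact hσ' (Finset.mem_filter.mpr ⟨Finset.mem_univ _, hc, h2⟩)
    · have hσ' : σ ∉ t := Finset.mem_compl.mp hσ
      show σ⁻¹ ∈ tᶜ
      refine Finset.mem_compl.mpr (fun hc => ?_)
      rw [Finset.mem_filter] at hc
      obtain ⟨-, h1, h2⟩ := hc
      have heq : σ = σ⁻¹ := by rw [← h1]; simp
      apply hσ'
      refine Finset.mem_filter.mpr ⟨Finset.mem_univ _, heq.symm, fun i hi => ?_⟩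
      rw [heq] at hi
      exact h2 i hi
  rw [hzero, add_zero, CharTwo.sum_sq]
  apply Finset.sum_congr rfl
  intro σ hσ
  rw [Finset.mem_filter] at hσ
  obtain ⟨-, hinv2, hfp⟩ := hσ
  have hσσ : ∀ i, σ (σ i) = i := by
    intro i
    have h := congrFun (congrArg (fun τ : Equiv.Perm (Fin n) => (τ : Fin n → Fin n)) hinv2) (σ i)
    simpa using h.symm
  set s := Finset.univ.filter (fun i => i < σ i) with hs
  have hts : Finset.univ.filter (fun i : Fin n => σ i < i) = s.image σ := by
    ext i
    simp only [Finset.mem_filter, Finset.mem_univ, true_and, Finset.mem_image, hs]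
    constructor
    · intro h; exact ⟨σ i, by rw [hσσ]; exact h, hσσ i⟩
    · rintro ⟨j, hj, rfl⟩; rw [hσσ]; exact hj
  have hsplit2 : (Finset.univ : Finset (Fin n)) = s ∪ s.image σ := by
    rw [← hts]
    ext i
    simp only [Finset.mem_univ, Finset.mem_union, Finset.mem_filter, true_and, true_iff, hs]
    rcases lt_trichotomy i (σ i) with h | h | h
    · exact Or.inl h
    · exact absurd h.symm (hfp i)
    · exact Or.inr h
  have hdisj : Disjoint s (s.image σ) := by
    rw [← hts]
    rw [Finset.disjoint_filter]
    intro i _ h1 h2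
    exact absurd (h1.trans h2) (lt_irrefl i)
  rw [hsplit2, Finset.prod_union hdisj, sq]
  congr 1
  rw [Finset.prod_image (by intro a _ b _ h; exact σ.injective h)]
  apply Finset.prod_congr rfl
  intro j _
  rw [hσσ, hsym]

lemma sq_inj {S : Type*} [CommRing S] [IsDomain S] [CharP S 2] {g h : S}
    (e : g ^ 2 = h ^ 2) : g = h := by
  have c2 : (2 : S) = 0 := CharTwo.two_eq_zero
  have h2 : (g - h) ^ 2 = 0 := by linear_combination e + (h * h - g * h) * c2
  exact sub_eq_zero.mp (pow_eq_zero_iff (two_ne_zero) |>.mp h2)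

lemma card_filter_lt {n : ℕ} (σ : Equiv.Perm (Fin n)) (hσσ : ∀ i, σ (σ i) = i)
    (hfp : ∀ i, σ i ≠ i) :
    2 * (Finset.univ.filter (fun i => i < σ i)).card = n := by
  classical
  set s := Finset.univ.filter (fun i : Fin n => i < σ i) with hs
  have hts : Finset.univ.filter (fun i : Fin n => σ i < i) = s.image σ := by
    ext i
    simp only [Finset.mem_filter, Finset.mem_univ, true_and, Finset.mem_image, hs]
    constructor
    · intro h; exact ⟨σ i, by rw [hσσ]; exact h, hσσ i⟩
    · rintro ⟨j, hj, rfl⟩; rw [hσσ]; exact hj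
  have hsplit2 : (Finset.univ : Finset (Fin n)) = s ∪ s.image σ := by
    rw [← hts]
    ext i
    simp only [Finset.mem_univ, Finset.mem_union, Finset.mem_filter, true_and, true_iff, hs]
    rcases lt_trichotomy i (σ i) with h | h | h
    · exact Or.inl h
    · exact absurd h.symm (hfp i)
    · exact Or.inr h
  have hdisj : Disjoint s (s.image σ) := by
    rw [← hts, Finset.disjoint_filter]
    intro i _ h1 h2
    exact absurd (h1.trans h2) (lt_irrefl i)
  have hcard : (Finset.univ : Finset (Fin n)).card = n := Finset.card_univ.trans (Fintype.card_fin n)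
  rw [hsplit2, Finset.card_union_of_disjoint hdisj,
    Finset.card_image_of_injective _ σ.injective] at hcard
  omega

/-- Over a field `k` of characteristic `2`, for `m ≥ 2` and `2r ≤ 2m - 4`,
there is a unique polynomial `g` with `g² = det(J_{2r,2m} + A)` (where `A` is
the generic anti-symmetric matrix), and the homogeneous components of `g`
of degrees `0` and `1` both vanish. -/
theorem sqrt_det_no_low_terms {k : Type*} [Field k] [CharP k 2] {m r : ℕ}
    (hm : 2 ≤ m) (hr : 2 * r ≤ 2 * m - 4) :
    (∃! g : MvPolynomial (PairIdx m) k,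
        g ^ 2 = (Jmat (MvPolynomial (PairIdx m) k) r (2*m) + AmatSym k m).det) ∧
    ∀ g : MvPolynomial (PairIdx m) k,
      g ^ 2 = (Jmat (MvPolynomial (PairIdx m) k) r (2*m) + AmatSym k m).det →
        MvPolynomial.homogeneousComponent 0 g = 0 ∧
        MvPolynomial.homogeneousComponent 1 g = 0 := by
  classical
  set S := MvPolynomial (PairIdx m) k with hS
  set M := Jmat S r (2*m) + AmatSym k m with hM
  have hsym : ∀ i j, M j i = M i j := by
    intro i j
    simp only [hM, Matrix.add_apply]
    congr 1
    · simp only [Jmat, Matrix.of_apply]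
      split_ifs <;> first | rfl | exact CharTwo.neg_eq 1 | exact (CharTwo.neg_eq 1).symm | omega
    · simp only [AmatSym, Matrix.of_apply]
      rcases lt_trichotomy i j with h | h | h
      · rw [dif_neg (asymm h), dif_pos h, dif_pos h]
      · subst h; rfl
      · rw [dif_pos h, dif_neg (asymm h), dif_pos h]
  have hdiag : ∀ i, M i i = 0 := by
    intro i
    simp only [hM, Matrix.add_apply, Jmat, AmatSym, Matrix.of_apply]
    rw [dif_neg (lt_irrefl i), if_neg (by omega), if_neg (by omega)]
    simp
  have hdet := det_eq_sq M hsym hdiag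
  set g₀ : S := ∑ σ ∈ Finset.univ.filter
      (fun σ : Equiv.Perm (Fin (2*m)) => σ⁻¹ = σ ∧ ∀ i, σ i ≠ i),
    ∏ i ∈ Finset.univ.filter (fun i => i < σ i), M i (σ i) with hg₀
  have huniq : ∀ g : S, g ^ 2 = M.det → g = g₀ := by
    intro g hg
    exact sq_inj (by rw [hg, hdet])
  -- low degree coefficients of g₀ vanish
  have hcoeff : ∀ d : (PairIdx m) →₀ ℕ, d.degree ≤ 1 → MvPolynomial.coeff d g₀ = 0 := by
    intro d hd
    rw [hg₀, MvPolynomial.coeff_sum]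
    apply Finset.sum_eq_zero
    intro σ hσ
    rw [Finset.mem_filter] at hσ
    obtain ⟨-, hinv2, hfp⟩ := hσ
    have hσσ : ∀ i, σ (σ i) = i := by
      intro i
      have h := congrFun (congrArg (fun τ : Equiv.Perm (Fin (2*m)) => (τ : Fin (2*m) → Fin (2*m))) hinv2) (σ i)
      simpa using h.symm
    set s := Finset.univ.filter (fun i : Fin (2*m) => i < σ i) with hs
    have hcards : 2 * s.card = 2 * m := card_filter_lt σ hσσ hfp
    set bad := s.filter (fun i : Fin (2*m) =>
      ((σ i : ℕ) = (i : ℕ) + 1 ∧ (i : ℕ) % 2 = 0 ∧ ((σ i : ℕ)) < 2*r)) with hbad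
    have hbadcard : bad.card ≤ Finset.card (Finset.range r) := by
      apply Finset.card_le_card_of_injOn (fun i : Fin (2*m) => (i : ℕ) / 2)
      · intro i hi
        rw [hbad, Finset.mem_coe, Finset.mem_filter, hs, Finset.mem_filter] at hi
        have hlt : (i : ℕ) < (σ i : ℕ) := hi.1.2
        rw [Finset.mem_coe, Finset.mem_range]
        dsimp only
        omega
      · intro i hi j hj hij
        simp only [Finset.mem_coe, hbad, Finset.mem_filter] at hi hj
        apply Fin.ext
        simp only at hij
        omega
    rw [Finset.card_range] at hbadcard
    have hsub : bad ⊆ s := Finset.filter_subset _ _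
    have hs2 : 1 < (s \ bad).card := by
      rw [Finset.card_sdiff_of_subset hsub]
      omega
    obtain ⟨a, ha, b, hb, hab⟩ := Finset.one_lt_card.mp hs2
    have hmem : ∀ c : Fin (2*m), c ∈ s \ bad →
        ∃ h : c < σ c, M c (σ c) = MvPolynomial.X ⟨(c, σ c), h⟩ := by
      intro c hc
      rw [Finset.mem_sdiff] at hc
      obtain ⟨hc1, hc2⟩ := hc
      have hlt : c < σ c := (Finset.mem_filter.mp hc1).2
      have hltn : (c : ℕ) < (σ c : ℕ) := hlt
      refine ⟨hlt, ?_⟩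
      have hncond : ¬((σ c : ℕ) = (c : ℕ) + 1 ∧ (c : ℕ) % 2 = 0 ∧ ((σ c : ℕ)) < 2*r) := by
        intro hcond
        exact hc2 (Finset.mem_filter.mpr ⟨hc1, hcond⟩)
      simp only [hM, Matrix.add_apply, Jmat, AmatSym, Matrix.of_apply]
      rw [if_neg hncond, if_neg (by omega), dif_pos hlt, zero_add]
    obtain ⟨hal, haX⟩ := hmem a ha
    obtain ⟨hbl, hbX⟩ := hmem b hb
    have ha' : a ∈ s := (Finset.mem_sdiff.mp ha).1
    have hb' : b ∈ s.erase a := Finset.mem_erase.mpr ⟨hab.symm, (Finset.mem_sdiff.mp hb).1⟩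
    rw [← Finset.mul_prod_erase s _ ha', ← Finset.mul_prod_erase _ _ hb', haX, hbX]
    rw [MvPolynomial.coeff_X_mul']
    split_ifs with h1
    · rw [MvPolynomial.coeff_X_mul', if_neg ?_]
      rw [Finsupp.mem_support_iff] at h1
      rw [Finsupp.mem_support_iff, not_not, Finsupp.tsub_apply]
      have hda := Finsupp.le_degree (⟨(a, σ a), hal⟩ : PairIdx m) d
      by_cases hv : (⟨(a, σ a), hal⟩ : PairIdx m) = ⟨(b, σ b), hbl⟩
      · rw [← hv, Finsupp.single_eq_same]
        omega
      · rw [Finsupp.single_eq_of_ne' hv]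
        have hdb := Finsupp.le_degree (⟨(b, σ b), hbl⟩ : PairIdx m) d
        have hpair : d ⟨(a, σ a), hal⟩ + d ⟨(b, σ b), hbl⟩ ≤ d.degree := by
          by_cases hdbz : d ⟨(b, σ b), hbl⟩ = 0
          · omega
          · have hsup : ({⟨(a, σ a), hal⟩, ⟨(b, σ b), hbl⟩} : Finset (PairIdx m)) ⊆ d.support := by
              intro x hx
              rw [Finset.mem_insert, Finset.mem_singleton] at hx
              rcases hx with rfl | rfl <;> rw [Finsupp.mem_support_iff]
              · omega
              · exact hdbz
            calc d ⟨(a, σ a), hal⟩ + d ⟨(b, σ b), hbl⟩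
                = ∑ x ∈ ({⟨(a, σ a), hal⟩, ⟨(b, σ b), hbl⟩} : Finset (PairIdx m)), d x :=
                  (Finset.sum_pair hv).symm
              _ ≤ ∑ x ∈ d.support, d x := Finset.sum_le_sum_of_subset hsup
              _ = d.degree := rfl
        omega
    · rfl
  have hcomp : ∀ n : ℕ, n ≤ 1 → MvPolynomial.homogeneousComponent n g₀ = 0 := by
    intro n hn
    apply MvPolynomial.ext
    intro d
    rw [MvPolynomial.coeff_homogeneousComponent, MvPolynomial.coeff_zero]
    split_ifs with h
    · exact hcoeff d (by omega)
    · rfl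
  refine ⟨⟨g₀, hdet.symm, huniq⟩, ?_⟩
  intro g hg
  rw [huniq g hg]
  exact ⟨hcomp 0 (by omega), hcomp 1 (by omega)⟩
end

section
/- Let K be a field, let n ≥ 2 be an even integer, and let T ∈ GL(n, K). Then Tᵀ J_{n−2,n} T = J_{n−2,n} holds if and only if, writing T in block form with respect to the decomposition n = (n−2) + 2 as T = [[A, A'],[C, B]] where A is (n−2)×(n−2) and B is 2×2, one has A' = 0, Aᵀ J_{n−2,n−2} A = J_{n−2,n−2}, and B ∈ GL(2, K) (with C an arbitrary 2×(n−2) block). -/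
open Matrix

lemma Jmat_mul_self (K : Type*) [CommRing K] (r : ℕ) :
    Jmat K r (2*r) * Jmat K r (2*r) = -1 := by
  ext i j
  rw [mul_apply]
  have hi := i.isLt
  have hj := j.isLt
  by_cases hpar : (i : ℕ) % 2 = 0
  · have hlt : (i : ℕ) + 1 < 2*r := by omega
    rw [Finset.sum_eq_single (⟨(i:ℕ)+1, hlt⟩ : Fin (2*r))]
    · simp only [Jmat, of_apply, Matrix.neg_apply, Matrix.one_apply, Fin.ext_iff, Fin.val_mk, true_and]
      split_ifs <;> first | (exfalso; omega) | norm_num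
    · intro k _ hk
      have hk' : (k : ℕ) ≠ (i:ℕ)+1 := fun h => hk (Fin.ext h)
      simp only [Jmat, of_apply, Fin.val_mk]
      split_ifs <;> first | (exfalso; omega) | norm_num
    · simp
  · have hlt : (i : ℕ) - 1 < 2*r := by omega
    rw [Finset.sum_eq_single (⟨(i:ℕ)-1, hlt⟩ : Fin (2*r))]
    · simp only [Jmat, of_apply, Matrix.neg_apply, Matrix.one_apply, Fin.ext_iff, Fin.val_mk, true_and]
      split_ifs <;> first | (exfalso; omega) | norm_num
    · intro k _ hk
      have hk' : (k : ℕ) ≠ (i:ℕ)-1 := fun h => hk (Fin.ext h)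
      simp only [Jmat, of_apply, Fin.val_mk]
      split_ifs <;> first | (exfalso; omega) | norm_num
    · simp

lemma Jmat_right_inv (K : Type*) [CommRing K] (r : ℕ) :
    Jmat K r (2*r) * (-(Jmat K r (2*r))) = 1 := by
  rw [mul_neg, Jmat_mul_self]; simp

lemma isUnit_Jmat_det (K : Type*) [CommRing K] (r : ℕ) :
    IsUnit (Jmat K r (2*r)).det := by
  have := invertibleOfRightInverse (h := Jmat_right_inv K r)
  exact Matrix.isUnit_det_of_invertible _

lemma reindex_conj {K : Type*} [CommRing K] {m : Type*} {n : Type*} [Fintype m] [Fintype n]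
    [DecidableEq m] [DecidableEq n] (e : m ≃ n) (X Y : Matrix m m K) :
    ((Matrix.reindex e e) X)ᵀ * (Matrix.reindex e e) Y * (Matrix.reindex e e) X =
      (Matrix.reindex e e) (Xᵀ * Y * X) := by
  simp [Matrix.reindex_apply, Matrix.transpose_submatrix, Matrix.submatrix_mul_equiv]

lemma Jmat_block (K : Type*) [CommRing K] (r : ℕ) :
    Jmat K r (2*r+2) =
      Matrix.reindex finSumFinEquiv finSumFinEquiv
        (Matrix.fromBlocks (Jmat K r (2*r)) 0 0 (0 : Matrix (Fin 2) (Fin 2) K)) := by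
  rw [reindex_apply]
  ext i j
  have hi : i = finSumFinEquiv (finSumFinEquiv.symm i) := (Equiv.apply_symm_apply _ _).symm
  have hj : j = finSumFinEquiv (finSumFinEquiv.symm j) := (Equiv.apply_symm_apply _ _).symm
  rcases h : finSumFinEquiv.symm i with a | a <;> rw [h] at hi <;>
    rcases h' : finSumFinEquiv.symm j with b | b <;> rw [h'] at hj <;> subst hi <;> subst hj
  · simp only [submatrix_apply, Equiv.symm_apply_apply, finSumFinEquiv_apply_left,
      finSumFinEquiv_symm_apply_castAdd, fromBlocks_apply₁₁, Jmat, of_apply, Fin.coe_castAdd]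
  · have ha := a.isLt
    have hb := b.isLt
    simp only [submatrix_apply, Equiv.symm_apply_apply, finSumFinEquiv_apply_left,
      finSumFinEquiv_apply_right, fromBlocks_apply₁₂, Jmat, of_apply, Fin.coe_castAdd,
      Fin.coe_natAdd, Matrix.zero_apply]
    split_ifs <;> first | (exfalso; omega) | norm_num
  · have ha := a.isLt
    have hb := b.isLt
    simp only [submatrix_apply, Equiv.symm_apply_apply, finSumFinEquiv_apply_left,
      finSumFinEquiv_apply_right, fromBlocks_apply₂₁, Jmat, of_apply, Fin.coe_castAdd,
      Fin.coe_natAdd, Matrix.zero_apply]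
    split_ifs <;> first | (exfalso; omega) | norm_num
  · have ha := a.isLt
    have hb := b.isLt
    simp only [submatrix_apply, Equiv.symm_apply_apply, finSumFinEquiv_apply_right,
      fromBlocks_apply₂₂, Jmat, of_apply, Fin.coe_natAdd, Matrix.zero_apply]
    split_ifs <;> first | (exfalso; omega) | norm_num

/-- Let `K` be a field and `n = 2r + 2` an even integer `≥ 2`, and let
`T ∈ GL(n, K)`. Then `Tᵀ J_{n-2,n} T = J_{n-2,n}` holds if and only if, writing
`T` in block form with respect to `n = (n-2) + 2` as `[[A, A'],[C, B]]`, one has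
`A' = 0`, `Aᵀ J_{n-2,n-2} A = J_{n-2,n-2}`, and `B ∈ GL(2, K)` (with `C`
arbitrary). -/
theorem preserve_Jmat_iff_block_form {K : Type*} [Field K] {r : ℕ}
    (T : Matrix (Fin (2*r+2)) (Fin (2*r+2)) K) (hT : IsUnit T.det) :
    Tᵀ * Jmat K r (2*r+2) * T = Jmat K r (2*r+2) ↔
      ∃ (A : Matrix (Fin (2*r)) (Fin (2*r)) K)
        (C : Matrix (Fin 2) (Fin (2*r)) K)
        (B : Matrix (Fin 2) (Fin 2) K),
        T = Matrix.reindex finSumFinEquiv finSumFinEquiv (Matrix.fromBlocks A 0 C B) ∧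
        Aᵀ * Jmat K r (2*r) * A = Jmat K r (2*r) ∧
        IsUnit B.det := by
  have hJblk := Jmat_block K r
  set J0 := Jmat K r (2*r) with hJ0
  set e := (finSumFinEquiv : Fin (2*r) ⊕ Fin 2 ≃ Fin (2*r+2))
  constructor
  · intro h
    set M : Matrix (Fin (2*r) ⊕ Fin 2) (Fin (2*r) ⊕ Fin 2) K :=
      (Matrix.reindex e e).symm T with hMdef
    have hTM : T = Matrix.reindex e e M := by
      rw [hMdef, Equiv.apply_symm_apply]
    have key : Mᵀ * (Matrix.fromBlocks J0 0 0 0) * M = Matrix.fromBlocks J0 0 0 0 := by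
      apply (Matrix.reindex e e).injective
      rw [← reindex_conj, ← hTM, ← hJblk, h, hJblk]
    set A := M.toBlocks₁₁ with hA
    set A' := M.toBlocks₁₂ with hA'
    set C := M.toBlocks₂₁ with hC
    set B := M.toBlocks₂₂ with hB
    have hM4 : M = Matrix.fromBlocks A A' C B := (Matrix.fromBlocks_toBlocks M).symm
    rw [hM4] at key
    simp only [Matrix.fromBlocks_transpose, Matrix.fromBlocks_multiply, Matrix.mul_zero,
      Matrix.zero_mul, add_zero, zero_add] at key
    rw [Matrix.fromBlocks_inj] at key
    obtain ⟨e1, e2, e3, e4⟩ := key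
    have hJdet : IsUnit J0.det := isUnit_Jmat_det K r
    have hdetA : IsUnit A.det := by
      have hd := congrArg Matrix.det e1
      rw [Matrix.det_mul, Matrix.det_mul, Matrix.det_transpose] at hd
      have hJne : J0.det ≠ 0 := hJdet.ne_zero
      have : A.det * A.det = 1 := by
        apply mul_right_cancel₀ hJne
        linear_combination hd
      exact IsUnit.of_mul_eq_one _ this
    have hUnit : IsUnit ((Aᵀ * J0).det) := by
      rw [Matrix.det_mul, Matrix.det_transpose]
      exact hdetA.mul hJdet
    have hA'0 : A' = 0 := by
      have h1 : (Aᵀ * J0)⁻¹ * (Aᵀ * J0 * A') = A' := by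
        rw [← Matrix.mul_assoc, Matrix.nonsing_inv_mul _ hUnit, Matrix.one_mul]
      rw [← h1, e2, Matrix.mul_zero]
    refine ⟨A, C, B, ?_, e1, ?_⟩
    · rw [hTM, hM4, hA'0]
    · have hdT : T.det = A.det * B.det := by
        rw [hTM, hM4, hA'0, Matrix.det_reindex_self, Matrix.det_fromBlocks_zero₁₂]
      rw [hdT] at hT
      exact (IsUnit.mul_iff.mp hT).2
  · rintro ⟨A, C, B, rfl, hA, hB⟩
    rw [hJblk, reindex_conj]
    congr 1
    simp only [Matrix.fromBlocks_transpose, Matrix.fromBlocks_multiply, Matrix.transpose_zero,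
      Matrix.mul_zero, Matrix.zero_mul, add_zero, zero_add]
    rw [hA]
end

section
/- Let k be an algebraically closed field of characteristic 2, and let g₁, …, g_l be formal power series in k[[s,t]] each of which is degenerate, i.e., for each i the coefficients of 1, s, t, and st in g_i all vanish. Let a_i and b_i denote the coefficients of s² and t² in g_i, respectively, and let J be the ideal of k[[s,t]] generated by g₁, …, g_l. Then the following are equivalent: (1) dim_k k[[s,t]]/J ≤ 4; (2) J = (s², t²); (3) the 2×l matrix whose first row is (a₁, …, a_l) and second row is (b₁, …, b_l) has rank 2. -/
open MvPowerSeries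

section DegenerateAux

variable {k : Type*} [Field k]
variable {l : ℕ}


lemma aux_eq_single {x : Fin 2} {u v : Fin 2 →₀ ℕ} {m : ℕ} (h : u + v = Finsupp.single x m) :
    u = Finsupp.single x (u x) ∧ v = Finsupp.single x (v x) ∧ u x + v x = m := by
  have hy : ∀ y, y ≠ x → u y = 0 ∧ v y = 0 := by
    intro y hy
    have := DFunLike.congr_fun h y
    simp [Finsupp.single_apply, hy.symm] at this
    omega
  refine ⟨?_, ?_, ?_⟩
  · ext y; by_cases hxy : y = x
    · subst hxy; simp [Finsupp.single_apply]
    · simp [Finsupp.single_apply, Ne.symm hxy, (hy y hxy).1]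
  · ext y; by_cases hxy : y = x
    · subst hxy; simp [Finsupp.single_apply]
    · simp [Finsupp.single_apply, Ne.symm hxy, (hy y hxy).2]
  · have := DFunLike.congr_fun h x
    simpa [Finsupp.single_apply] using this

lemma coeff_single_mul (x : Fin 2) (m : ℕ) (r φ : MvPowerSeries (Fin 2) k)
    (h : ∀ j < m, MvPowerSeries.coeff (Finsupp.single x j) φ = 0) :
    MvPowerSeries.coeff (Finsupp.single x m) (r * φ) =
      MvPowerSeries.constantCoeff r * MvPowerSeries.coeff (Finsupp.single x m) φ := by
  rw [MvPowerSeries.coeff_mul]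
  rw [Finset.sum_eq_single ((0 : Fin 2 →₀ ℕ), Finsupp.single x m)]
  · simp [MvPowerSeries.coeff_zero_eq_constantCoeff]
  · rintro ⟨u, v⟩ hmem hne
    rw [Finset.HasAntidiagonal.mem_antidiagonal] at hmem
    simp only at hmem hne ⊢
    obtain ⟨hu, hv, hsum⟩ := aux_eq_single hmem
    have hux : u x ≠ 0 := by
      rintro h0
      apply hne
      have hu0 : u = 0 := by rw [hu, h0, Finsupp.single_zero]
      have : v = Finsupp.single x m := by rw [hv]; congr 1; omega
      rw [hu0, this]
    have : v x < m := by omega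
    have : MvPowerSeries.coeff v φ = 0 := by rw [hv]; exact h _ this
    simp [this]
  · intro habs
    exact absurd (Finset.HasAntidiagonal.mem_antidiagonal.mpr (zero_add _)) habs


lemma fin2_decompose (n : Fin 2 →₀ ℕ) :
    n = Finsupp.single 0 (n 0) + Finsupp.single 1 (n 1) := by
  ext x; fin_cases x <;> simp [Finsupp.single_apply]

lemma decomp (φ : MvPowerSeries (Fin 2) k)
    (h00 : MvPowerSeries.coeff (0 : Fin 2 →₀ ℕ) φ = 0)
    (h10 : MvPowerSeries.coeff (Finsupp.single (0 : Fin 2) 1) φ = 0)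
    (h01 : MvPowerSeries.coeff (Finsupp.single (1 : Fin 2) 1) φ = 0)
    (h11 : MvPowerSeries.coeff
      (Finsupp.single (0 : Fin 2) 1 + Finsupp.single (1 : Fin 2) 1) φ = 0) :
    ∃ p q : MvPowerSeries (Fin 2) k,
      φ = (MvPowerSeries.X 0) ^ 2 * p + (MvPowerSeries.X 1) ^ 2 * q ∧
      MvPowerSeries.constantCoeff p
        = MvPowerSeries.coeff (Finsupp.single (0 : Fin 2) 2) φ ∧
      MvPowerSeries.constantCoeff q
        = MvPowerSeries.coeff (Finsupp.single (1 : Fin 2) 2) φ := by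
  classical
  set e20 : Fin 2 →₀ ℕ := Finsupp.single 0 2 with he20
  set e02 : Fin 2 →₀ ℕ := Finsupp.single 1 2 with he02
  let p : MvPowerSeries (Fin 2) k := fun n => MvPowerSeries.coeff (n + e20) φ
  let q : MvPowerSeries (Fin 2) k := fun n =>
    if n 0 ≤ 1 then MvPowerSeries.coeff (n + e02) φ else 0
  have hp : ∀ n, MvPowerSeries.coeff n p = MvPowerSeries.coeff (n + e20) φ := fun n => rfl
  have hq : ∀ n, MvPowerSeries.coeff n q =
      if n 0 ≤ 1 then MvPowerSeries.coeff (n + e02) φ else 0 := fun n => rfl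
  refine ⟨p, q, ?_, ?_, ?_⟩
  · apply MvPowerSeries.ext
    intro n
    rw [map_add]
    rw [MvPowerSeries.X_pow_eq, MvPowerSeries.X_pow_eq,
      MvPowerSeries.coeff_monomial_mul, MvPowerSeries.coeff_monomial_mul]
    by_cases h2 : 2 ≤ n 0
    · have hle : e20 ≤ n := by rw [he20]; exact Finsupp.single_le_iff.mpr h2
      rw [if_pos hle, hp, tsub_add_cancel_of_le hle, one_mul]
      have hzero : (if e02 ≤ n then
          1 * MvPowerSeries.coeff (n - e02) q else 0) = 0 := by
        by_cases h2' : e02 ≤ n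
        · rw [if_pos h2', hq]
          have : (n - e02) 0 = n 0 := by
            rw [Finsupp.tsub_apply, he02, Finsupp.single_apply]; simp
          rw [this, if_neg (by omega)]
          simp
        · rw [if_neg h2']
      rw [hzero, add_zero]
    · have hnle : ¬ e20 ≤ n := by
        rw [he20, Finsupp.single_le_iff]; omega
      rw [if_neg hnle, zero_add]
      by_cases h2' : 2 ≤ n 1
      · have hle : e02 ≤ n := by rw [he02]; exact Finsupp.single_le_iff.mpr h2'
        rw [if_pos hle, hq]
        have h0 : (n - e02) 0 = n 0 := by
          rw [Finsupp.tsub_apply, he02, Finsupp.single_apply]; simp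
        rw [h0, if_pos (by omega), tsub_add_cancel_of_le hle, one_mul]
      · have hnle' : ¬ e02 ≤ n := by
          rw [he02, Finsupp.single_le_iff]; omega
        rw [if_neg hnle']
        -- now n 0 ≤ 1 and n 1 ≤ 1; coeff n φ = 0
        have hn := fin2_decompose n
        interval_cases hn0 : n 0 <;> interval_cases hn1 : n 1 <;>
          (try simp only [Finsupp.single_zero, zero_add, add_zero] at hn) <;>
          rw [hn] <;> first | exact h00 | exact h10 | exact h01 | exact h11
  · rw [MvPowerSeries.coeff_zero_eq_constantCoeff.symm, hp, zero_add]
  · rw [MvPowerSeries.coeff_zero_eq_constantCoeff.symm, hq]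
    simp


lemma low_coeff_of_mem {φ : MvPowerSeries (Fin 2) k}
    (h : φ ∈ Ideal.span ({(MvPowerSeries.X 0) ^ 2, (MvPowerSeries.X 1) ^ 2} :
      Set (MvPowerSeries (Fin 2) k)))
    {n : Fin 2 →₀ ℕ} (hn0 : n 0 ≤ 1) (hn1 : n 1 ≤ 1) :
    MvPowerSeries.coeff n φ = 0 := by
  rw [Ideal.mem_span_pair] at h
  obtain ⟨u, v, rfl⟩ := h
  rw [map_add, MvPowerSeries.X_pow_eq, MvPowerSeries.X_pow_eq,
    MvPowerSeries.coeff_mul_monomial, MvPowerSeries.coeff_mul_monomial,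
    if_neg (by rw [Finsupp.single_le_iff]; omega),
    if_neg (by rw [Finsupp.single_le_iff]; omega), add_zero]
lemma functional_vanishes {l : ℕ} (g : Fin l → MvPowerSeries (Fin 2) k)
    (hdeg : ∀ i,
      MvPowerSeries.coeff (0 : Fin 2 →₀ ℕ) (g i) = 0 ∧
      MvPowerSeries.coeff (Finsupp.single (0 : Fin 2) 1) (g i) = 0 ∧
      MvPowerSeries.coeff (Finsupp.single (1 : Fin 2) 1) (g i) = 0 ∧
      MvPowerSeries.coeff
        (Finsupp.single (0 : Fin 2) 1 + Finsupp.single (1 : Fin 2) 1) (g i) = 0)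
    (a b : k)
    (hab : ∀ i, a * MvPowerSeries.coeff (Finsupp.single (0 : Fin 2) 2) (g i)
      + b * MvPowerSeries.coeff (Finsupp.single (1 : Fin 2) 2) (g i) = 0)
    {φ : MvPowerSeries (Fin 2) k} (hφ : φ ∈ Ideal.span (Set.range g)) :
    MvPowerSeries.coeff (0 : Fin 2 →₀ ℕ) φ = 0 ∧
    MvPowerSeries.coeff (Finsupp.single (0 : Fin 2) 1) φ = 0 ∧
    MvPowerSeries.coeff (Finsupp.single (1 : Fin 2) 1) φ = 0 ∧
    a * MvPowerSeries.coeff (Finsupp.single (0 : Fin 2) 2) φ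
      + b * MvPowerSeries.coeff (Finsupp.single (1 : Fin 2) 2) φ = 0 := by
  induction hφ using Submodule.span_induction with
  | mem x hx =>
    obtain ⟨i, rfl⟩ := hx
    exact ⟨(hdeg i).1, (hdeg i).2.1, (hdeg i).2.2.1, hab i⟩
  | zero => simp
  | add x y _ _ hx hy =>
    refine ⟨?_, ?_, ?_, ?_⟩ <;> simp only [map_add]
    · rw [hx.1, hy.1, add_zero]
    · rw [hx.2.1, hy.2.1, add_zero]
    · rw [hx.2.2.1, hy.2.2.1, add_zero]
    · linear_combination hx.2.2.2 + hy.2.2.2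
  | smul r x _ hx =>
    obtain ⟨q0, q1, q2, q3⟩ := hx
    rw [smul_eq_mul]
    have c0 : MvPowerSeries.coeff (0 : Fin 2 →₀ ℕ) (r * x) = 0 := by
      have := coeff_single_mul (k := k) 0 0 r x (by omega)
      rw [Finsupp.single_zero] at this
      rw [this, q0, mul_zero]
    have c1 : MvPowerSeries.coeff (Finsupp.single (0 : Fin 2) 1) (r * x) = 0 := by
      rw [coeff_single_mul 0 1 r x (by intro j hj; interval_cases j; simpa using q0), q1,
        mul_zero]
    have c2 : MvPowerSeries.coeff (Finsupp.single (1 : Fin 2) 1) (r * x) = 0 := by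
      rw [coeff_single_mul 1 1 r x (by intro j hj; interval_cases j; simpa using q0), q2,
        mul_zero]
    refine ⟨c0, c1, c2, ?_⟩
    have hlt0 : ∀ j < 2, MvPowerSeries.coeff (Finsupp.single (0:Fin 2) j) x = 0 := by
      intro j hj
      interval_cases j
      · simpa using q0
      · exact q1
    have hlt1 : ∀ j < 2, MvPowerSeries.coeff (Finsupp.single (1:Fin 2) j) x = 0 := by
      intro j hj
      interval_cases j
      · simpa using q0
      · exact q2
    rw [coeff_single_mul 0 2 r x hlt0, coeff_single_mul 1 2 r x hlt1]
    linear_combination (MvPowerSeries.constantCoeff r) * q3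


lemma rank_combo (M : Matrix (Fin 2) (Fin l) k) (h : M.rank = 2) :
    ∃ c d : Fin l → k,
      ((∑ i, c i * M 0 i) = 1 ∧ (∑ i, c i * M 1 i) = 0) ∧
      ((∑ i, d i * M 0 i) = 0 ∧ (∑ i, d i * M 1 i) = 1) := by
  have htop : LinearMap.range M.mulVecLin = ⊤ := by
    apply Submodule.eq_top_of_finrank_eq
    rw [← Matrix.rank, h]
    simp [Module.finrank_pi]
  have h1 : (![1, 0] : Fin 2 → k) ∈ LinearMap.range M.mulVecLin := htop ▸ Submodule.mem_top
  have h2 : (![0, 1] : Fin 2 → k) ∈ LinearMap.range M.mulVecLin := htop ▸ Submodule.mem_top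
  obtain ⟨c, hc⟩ := h1
  obtain ⟨d, hd⟩ := h2
  refine ⟨c, d, ⟨?_, ?_⟩, ?_, ?_⟩
  · have := congrFun hc 0
    simpa [Matrix.mulVecLin_apply, Matrix.mulVec, dotProduct, mul_comm] using this
  · have := congrFun hc 1
    simpa [Matrix.mulVecLin_apply, Matrix.mulVec, dotProduct, mul_comm] using this
  · have := congrFun hd 0
    simpa [Matrix.mulVecLin_apply, Matrix.mulVec, dotProduct, mul_comm] using this
  · have := congrFun hd 1
    simpa [Matrix.mulVecLin_apply, Matrix.mulVec, dotProduct, mul_comm] using this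

lemma rank_ann (M : Matrix (Fin 2) (Fin l) k) (h : M.rank ≠ 2) :
    ∃ a b : k, (a ≠ 0 ∨ b ≠ 0) ∧ ∀ i, a * M 0 i + b * M 1 i = 0 := by
  have hni : ¬ LinearIndependent k M := by
    intro hli
    exact h (by simpa using hli.rank_matrix)
  replace hni := Fintype.not_linearIndependent_iff.mp hni
  obtain ⟨c, hc, i, hi⟩ := hni
  refine ⟨c 0, c 1, ?_, ?_⟩
  · fin_cases i
    · exact Or.inl hi
    · exact Or.inr hi
  · intro j
    have := congrFun hc j
    simpa [Fin.sum_univ_two] using this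

-- membership from four vanishing coefficients
lemma mem_N_of_low (φ : MvPowerSeries (Fin 2) k)
    (h00 : MvPowerSeries.coeff (0 : Fin 2 →₀ ℕ) φ = 0)
    (h10 : MvPowerSeries.coeff (Finsupp.single (0 : Fin 2) 1) φ = 0)
    (h01 : MvPowerSeries.coeff (Finsupp.single (1 : Fin 2) 1) φ = 0)
    (h11 : MvPowerSeries.coeff
      (Finsupp.single (0 : Fin 2) 1 + Finsupp.single (1 : Fin 2) 1) φ = 0) :
    φ ∈ Ideal.span ({(MvPowerSeries.X 0) ^ 2, (MvPowerSeries.X 1) ^ 2} :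
      Set (MvPowerSeries (Fin 2) k)) := by
  obtain ⟨p, q, hpq, -, -⟩ := decomp φ h00 h10 h01 h11
  rw [Ideal.mem_span_pair]
  exact ⟨p, q, by rw [hpq]; ring⟩

-- the matrix-inverse argument: two elements of J with prescribed degree-2 coefficients
-- give N ≤ J.
lemma N_le_J (J : Ideal (MvPowerSeries (Fin 2) k))
    (g' h' : MvPowerSeries (Fin 2) k) (hg'J : g' ∈ J) (hh'J : h' ∈ J)
    (hg00 : MvPowerSeries.coeff (0 : Fin 2 →₀ ℕ) g' = 0)
    (hg10 : MvPowerSeries.coeff (Finsupp.single (0 : Fin 2) 1) g' = 0)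
    (hg01 : MvPowerSeries.coeff (Finsupp.single (1 : Fin 2) 1) g' = 0)
    (hg11 : MvPowerSeries.coeff
      (Finsupp.single (0 : Fin 2) 1 + Finsupp.single (1 : Fin 2) 1) g' = 0)
    (hg20 : MvPowerSeries.coeff (Finsupp.single (0 : Fin 2) 2) g' = 1)
    (hg02 : MvPowerSeries.coeff (Finsupp.single (1 : Fin 2) 2) g' = 0)
    (hh00 : MvPowerSeries.coeff (0 : Fin 2 →₀ ℕ) h' = 0)
    (hh10 : MvPowerSeries.coeff (Finsupp.single (0 : Fin 2) 1) h' = 0)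
    (hh01 : MvPowerSeries.coeff (Finsupp.single (1 : Fin 2) 1) h' = 0)
    (hh11 : MvPowerSeries.coeff
      (Finsupp.single (0 : Fin 2) 1 + Finsupp.single (1 : Fin 2) 1) h' = 0)
    (hh20 : MvPowerSeries.coeff (Finsupp.single (0 : Fin 2) 2) h' = 0)
    (hh02 : MvPowerSeries.coeff (Finsupp.single (1 : Fin 2) 2) h' = 1) :
    Ideal.span ({(MvPowerSeries.X 0) ^ 2, (MvPowerSeries.X 1) ^ 2} :
      Set (MvPowerSeries (Fin 2) k)) ≤ J := by
  classical
  obtain ⟨A, B, hgAB, hA0, hB0⟩ := decomp g' hg00 hg10 hg01 hg11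
  obtain ⟨C, D, hhCD, hC0, hD0⟩ := decomp h' hh00 hh10 hh01 hh11
  rw [hg20] at hA0
  rw [hg02] at hB0
  rw [hh20] at hC0
  rw [hh02] at hD0
  set d : MvPowerSeries (Fin 2) k := A * D - B * C with hd
  have hdu : IsUnit d := by
    rw [MvPowerSeries.isUnit_iff_constantCoeff]
    have : MvPowerSeries.constantCoeff d = 1 := by
      rw [hd, map_sub, map_mul, map_mul, hA0, hB0, hC0, hD0]
      ring
    rw [this]
    exact isUnit_one
  obtain ⟨e, he⟩ := isUnit_iff_exists_inv.mp hdu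
  have hX0 : (MvPowerSeries.X 0 : MvPowerSeries (Fin 2) k) ^ 2 = e * (D * g' - B * h') := by
    have h1 : D * g' - B * h' = d * ((MvPowerSeries.X 0) ^ 2) := by
      rw [hgAB, hhCD, hd]; ring
    rw [h1, ← mul_assoc, mul_comm e d, he, one_mul]
  have hX1 : (MvPowerSeries.X 1 : MvPowerSeries (Fin 2) k) ^ 2 = e * (A * h' - C * g') := by
    have h1 : A * h' - C * g' = d * ((MvPowerSeries.X 1) ^ 2) := by
      rw [hgAB, hhCD, hd]; ring
    rw [h1, ← mul_assoc, mul_comm e d, he, one_mul]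
  rw [Ideal.span_le]
  rintro x (rfl | rfl)
  · rw [hX0]
    exact Ideal.mul_mem_left _ _ (Ideal.sub_mem _ (Ideal.mul_mem_left _ _ hg'J)
      (Ideal.mul_mem_left _ _ hh'J))
  · rw [hX1]
    exact Ideal.mul_mem_left _ _ (Ideal.sub_mem _ (Ideal.mul_mem_left _ _ hh'J)
      (Ideal.mul_mem_left _ _ hg'J))
lemma rank_quot_le_four :
    Module.rank k (MvPowerSeries (Fin 2) k ⧸ Ideal.span
      ({(MvPowerSeries.X 0) ^ 2, (MvPowerSeries.X 1) ^ 2} :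
        Set (MvPowerSeries (Fin 2) k))) ≤ 4 := by
  classical
  set N : Ideal (MvPowerSeries (Fin 2) k) :=
    Ideal.span ({(MvPowerSeries.X 0) ^ 2, (MvPowerSeries.X 1) ^ 2} :
      Set (MvPowerSeries (Fin 2) k)) with hN
  set w : Fin 4 → MvPowerSeries (Fin 2) k :=
    ![1, MvPowerSeries.X 0, MvPowerSeries.X 1, MvPowerSeries.X 0 * MvPowerSeries.X 1] with hw
  set v : Fin 4 → (MvPowerSeries (Fin 2) k ⧸ N) := fun i => Ideal.Quotient.mk N (w i) with hv
  have hspan : Submodule.span k (Set.range v) = ⊤ := by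
    rw [Submodule.eq_top_iff']
    intro x
    obtain ⟨φ, rfl⟩ := Ideal.Quotient.mk_surjective x
    set c : Fin 4 → k := ![MvPowerSeries.coeff (0 : Fin 2 →₀ ℕ) φ,
      MvPowerSeries.coeff (Finsupp.single (0 : Fin 2) 1) φ,
      MvPowerSeries.coeff (Finsupp.single (1 : Fin 2) 1) φ,
      MvPowerSeries.coeff
        (Finsupp.single (0 : Fin 2) 1 + Finsupp.single (1 : Fin 2) 1) φ] with hc
    have hkey : φ - ∑ i, c i • w i ∈ N := by
      apply mem_N_of_low <;>
      · rw [map_sub, map_sum]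
        simp only [hw, hc]
        rw [Fin.sum_univ_four]
        simp only [Matrix.cons_val_zero, Matrix.cons_val_one, Matrix.head_cons,
          Matrix.cons_val_two, Matrix.tail_cons, Matrix.cons_val_three]
        rw [MvPowerSeries.X_def, MvPowerSeries.X_def, MvPowerSeries.monomial_mul_monomial]
        simp only [map_smul, smul_eq_mul, MvPowerSeries.coeff_one, MvPowerSeries.coeff_monomial,
          mul_one]
        simp [Finsupp.ext_iff, Fin.forall_fin_two, Finsupp.single_apply]
    have heq : (Ideal.Quotient.mk N φ) = ∑ i, c i • v i := by
      have h2 : ∑ i, c i • v i = Ideal.Quotient.mk N (∑ i, c i • w i) := by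
        rw [hv]
        rw [← Ideal.Quotient.mkₐ_eq_mk (R₁ := k), map_sum]
        simp only [map_smul]
      rw [h2, Ideal.Quotient.mk_eq_mk_iff_sub_mem]
      exact hkey
    rw [heq]
    exact Submodule.sum_mem _ fun i _ =>
      Submodule.smul_mem _ _ (Submodule.subset_span (Set.mem_range_self i))
  have hcard : Cardinal.mk (Set.range v) ≤ 4 := by
    have h1 := Cardinal.mk_range_le_lift (f := v)
    rw [Cardinal.mk_fin] at h1
    simp only [Cardinal.lift_natCast] at h1
    have h2 : Cardinal.mk (Set.range v) ≤ ((4:ℕ) : Cardinal) := by simpa using h1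
    calc Cardinal.mk (Set.range v) ≤ ((4:ℕ) : Cardinal) := h2
      _ ≤ 4 := by norm_num
  calc Module.rank k (MvPowerSeries (Fin 2) k ⧸ N)
      = Module.rank k (⊤ : Submodule k (MvPowerSeries (Fin 2) k ⧸ N)) := (rank_top k _).symm
    _ = Module.rank k (Submodule.span k (Set.range v)) := by rw [hspan]
    _ ≤ Cardinal.mk (Set.range v) := rank_span_le _
    _ ≤ 4 := hcard

lemma J_le_N {l : ℕ} (g : Fin l → MvPowerSeries (Fin 2) k)
    (hdeg : ∀ i,
      MvPowerSeries.coeff (0 : Fin 2 →₀ ℕ) (g i) = 0 ∧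
      MvPowerSeries.coeff (Finsupp.single (0 : Fin 2) 1) (g i) = 0 ∧
      MvPowerSeries.coeff (Finsupp.single (1 : Fin 2) 1) (g i) = 0 ∧
      MvPowerSeries.coeff
        (Finsupp.single (0 : Fin 2) 1 + Finsupp.single (1 : Fin 2) 1) (g i) = 0) :
    Ideal.span (Set.range g) ≤
      Ideal.span ({(MvPowerSeries.X 0) ^ 2, (MvPowerSeries.X 1) ^ 2} :
        Set (MvPowerSeries (Fin 2) k)) := by
  rw [Ideal.span_le]
  rintro x ⟨i, rfl⟩
  exact mem_N_of_low _ (hdeg i).1 (hdeg i).2.1 (hdeg i).2.2.1 (hdeg i).2.2.2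

end DegenerateAux

/-- Lemma on degenerate power series in `k[[s,t]]` in characteristic `2`:
let `g₁, …, g_l ∈ k[[s,t]]` be degenerate, i.e. the coefficients of `1`, `s`, `t`
and `st` of each `g_i` vanish, and let `a_i`, `b_i` be the coefficients of `s²`
and `t²` in `g_i`. Let `J = (g₁, …, g_l)`. Then the following are equivalent:
(1) `dim_k k[[s,t]]/J ≤ 4`; (2) `J = (s², t²)`; (3) the `2 × l` matrix with rows
`(a₁, …, a_l)` and `(b₁, …, b_l)` has rank `2`. -/
theorem degenerate_series_ideal_tfae {k : Type*} [Field k] [IsAlgClosed k]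
    [CharP k 2] {l : ℕ} (g : Fin l → MvPowerSeries (Fin 2) k)
    (hdeg : ∀ i,
      MvPowerSeries.coeff (0 : Fin 2 →₀ ℕ) (g i) = 0 ∧
      MvPowerSeries.coeff (Finsupp.single (0 : Fin 2) 1) (g i) = 0 ∧
      MvPowerSeries.coeff (Finsupp.single (1 : Fin 2) 1) (g i) = 0 ∧
      MvPowerSeries.coeff
        (Finsupp.single (0 : Fin 2) 1 + Finsupp.single (1 : Fin 2) 1) (g i) = 0) :
    (Module.rank k (MvPowerSeries (Fin 2) k ⧸ Ideal.span (Set.range g)) ≤ 4 ↔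
      Ideal.span (Set.range g) =
        Ideal.span ({(MvPowerSeries.X 0) ^ 2, (MvPowerSeries.X 1) ^ 2} :
          Set (MvPowerSeries (Fin 2) k))) ∧
    (Ideal.span (Set.range g) =
        Ideal.span ({(MvPowerSeries.X 0) ^ 2, (MvPowerSeries.X 1) ^ 2} :
          Set (MvPowerSeries (Fin 2) k)) ↔
      (Matrix.of fun (x : Fin 2) (i : Fin l) =>
        MvPowerSeries.coeff (Finsupp.single x 2) (g i)).rank = 2) := by
  classical
  set M : Matrix (Fin 2) (Fin l) k :=
    Matrix.of fun (x : Fin 2) (i : Fin l) =>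
      MvPowerSeries.coeff (Finsupp.single x 2) (g i) with hM
  set J : Ideal (MvPowerSeries (Fin 2) k) := Ideal.span (Set.range g) with hJdef
  set N : Ideal (MvPowerSeries (Fin 2) k) :=
    Ideal.span ({(MvPowerSeries.X 0) ^ 2, (MvPowerSeries.X 1) ^ 2} :
      Set (MvPowerSeries (Fin 2) k)) with hNdef
  have hJN : J ≤ N := J_le_N g hdeg
  have hMa : ∀ i, M 0 i = MvPowerSeries.coeff (Finsupp.single (0 : Fin 2) 2) (g i) :=
    fun i => rfl
  have hMb : ∀ i, M 1 i = MvPowerSeries.coeff (Finsupp.single (1 : Fin 2) 2) (g i) :=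
    fun i => rfl
  -- coefficients of linear combinations
  have hcoeff : ∀ (n : Fin 2 →₀ ℕ) (cv : Fin l → k),
      MvPowerSeries.coeff n (∑ i, cv i • g i) = ∑ i, cv i * MvPowerSeries.coeff n (g i) := by
    intro n cv
    rw [map_sum]
    simp
  have hmemJ : ∀ cv : Fin l → k, (∑ i, cv i • g i) ∈ J := by
    intro cv
    refine Submodule.sum_mem _ fun i _ => ?_
    rw [MvPowerSeries.smul_eq_C_mul]
    exact Ideal.mul_mem_left _ _ (Ideal.subset_span (Set.mem_range_self i))
  -- (3) → (2)
  have h32 : M.rank = 2 → J = N := by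
    intro hr
    obtain ⟨c, d, ⟨hc0, hc1⟩, hd0, hd1⟩ := rank_combo M hr
    refine le_antisymm hJN (N_le_J J (∑ i, c i • g i) (∑ i, d i • g i)
      (hmemJ c) (hmemJ d) ?_ ?_ ?_ ?_ ?_ ?_ ?_ ?_ ?_ ?_ ?_ ?_)
    · rw [hcoeff]; exact Finset.sum_eq_zero fun i _ => by rw [(hdeg i).1, mul_zero]
    · rw [hcoeff]; exact Finset.sum_eq_zero fun i _ => by rw [(hdeg i).2.1, mul_zero]
    · rw [hcoeff]; exact Finset.sum_eq_zero fun i _ => by rw [(hdeg i).2.2.1, mul_zero]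
    · rw [hcoeff]; exact Finset.sum_eq_zero fun i _ => by rw [(hdeg i).2.2.2, mul_zero]
    · rw [hcoeff]; simpa [hMa] using hc0
    · rw [hcoeff]; simpa [hMb] using hc1
    · rw [hcoeff]; exact Finset.sum_eq_zero fun i _ => by rw [(hdeg i).1, mul_zero]
    · rw [hcoeff]; exact Finset.sum_eq_zero fun i _ => by rw [(hdeg i).2.1, mul_zero]
    · rw [hcoeff]; exact Finset.sum_eq_zero fun i _ => by rw [(hdeg i).2.2.1, mul_zero]
    · rw [hcoeff]; exact Finset.sum_eq_zero fun i _ => by rw [(hdeg i).2.2.2, mul_zero]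
    · rw [hcoeff]; simpa [hMa] using hd0
    · rw [hcoeff]; simpa [hMb] using hd1
  -- (2) → (3)
  have h23 : J = N → M.rank = 2 := by
    intro hJ
    by_contra hr
    obtain ⟨a, b, hab0, hab⟩ := rank_ann M hr
    have hab' : ∀ i, a * MvPowerSeries.coeff (Finsupp.single (0 : Fin 2) 2) (g i)
        + b * MvPowerSeries.coeff (Finsupp.single (1 : Fin 2) 2) (g i) = 0 := by
      intro i; simpa [hMa, hMb] using hab i
    have hX0 : (MvPowerSeries.X 0 : MvPowerSeries (Fin 2) k) ^ 2 ∈ J := by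
      rw [hJ]; exact Ideal.subset_span (Set.mem_insert _ _)
    have hX1 : (MvPowerSeries.X 1 : MvPowerSeries (Fin 2) k) ^ 2 ∈ J := by
      rw [hJ]
      exact Ideal.subset_span (Set.mem_insert_of_mem _ (Set.mem_singleton _))
    have hne01 : (Finsupp.single (1 : Fin 2) 2) ≠ Finsupp.single (0 : Fin 2) 2 := by
      simp [Finsupp.ext_iff, Fin.forall_fin_two, Finsupp.single_apply]
    have ha : a = 0 := by
      have := (functional_vanishes g hdeg a b hab' hX0).2.2.2
      rwa [MvPowerSeries.coeff_X_pow, MvPowerSeries.coeff_X_pow, if_pos rfl,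
        if_neg hne01, mul_one, mul_zero, add_zero] at this
    have hb : b = 0 := by
      have := (functional_vanishes g hdeg a b hab' hX1).2.2.2
      rwa [MvPowerSeries.coeff_X_pow, MvPowerSeries.coeff_X_pow,
        if_neg (Ne.symm hne01), if_pos rfl, mul_one, mul_zero, zero_add] at this
    rcases hab0 with h | h
    · exact h ha
    · exact h hb
  -- (2) → (1)
  have h21 : J = N → Module.rank k (MvPowerSeries (Fin 2) k ⧸ J) ≤ 4 := by
    intro hJ
    rw [hJ]
    exact rank_quot_le_four
  -- (1) → (2)
  have h12 : Module.rank k (MvPowerSeries (Fin 2) k ⧸ J) ≤ 4 → J = N := by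
    intro hrank
    by_contra hne
    obtain ⟨w, hwN, hwJ⟩ := SetLike.exists_of_lt (lt_of_le_of_ne hJN hne)
    have hw00 := low_coeff_of_mem hwN (n := (0 : Fin 2 →₀ ℕ)) (by simp) (by simp)
    have hw10 := low_coeff_of_mem hwN (n := Finsupp.single (0 : Fin 2) 1)
      (by simp [Finsupp.single_apply]) (by simp [Finsupp.single_apply])
    have hw01 := low_coeff_of_mem hwN (n := Finsupp.single (1 : Fin 2) 1)
      (by simp [Finsupp.single_apply]) (by simp [Finsupp.single_apply])
    have hw11 := low_coeff_of_mem hwN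
      (n := Finsupp.single (0 : Fin 2) 1 + Finsupp.single (1 : Fin 2) 1)
      (by simp [Finsupp.single_apply]) (by simp [Finsupp.single_apply])
    set u : Fin 5 → MvPowerSeries (Fin 2) k :=
      ![1, MvPowerSeries.X 0, MvPowerSeries.X 1, MvPowerSeries.X 0 * MvPowerSeries.X 1, w]
      with hu
    set v : Fin 5 → (MvPowerSeries (Fin 2) k ⧸ J) := fun i => Ideal.Quotient.mk J (u i) with hv
    have hli : LinearIndependent k v := by
      rw [Fintype.linearIndependent_iff]
      intro cc hcc
      have hmk : ∑ i, cc i • v i = Ideal.Quotient.mk J (∑ i, cc i • u i) := by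
        rw [hv, ← Ideal.Quotient.mkₐ_eq_mk (R₁ := k), map_sum]
        simp only [map_smul]
      rw [hmk, Ideal.Quotient.eq_zero_iff_mem] at hcc
      have hccN : (∑ i, cc i • u i) ∈ N := hJN hcc
      have hsum : ∀ n : Fin 2 →₀ ℕ,
          MvPowerSeries.coeff n (∑ i, cc i • u i) = ∑ i, cc i * MvPowerSeries.coeff n (u i)
        := by intro n; rw [map_sum]; simp
      have e0 : cc 0 = 0 := by
        have := low_coeff_of_mem hccN (n := (0 : Fin 2 →₀ ℕ)) (by simp) (by simp)
        rw [hsum, Fin.sum_univ_five] at this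
        simp only [hu, Matrix.cons_val_zero, Matrix.cons_val_one, Matrix.head_cons,
          Matrix.cons_val_two, Matrix.tail_cons, Matrix.cons_val_three,
          Matrix.cons_val_four] at this
        rw [MvPowerSeries.X_def, MvPowerSeries.X_def, MvPowerSeries.monomial_mul_monomial]
          at this
        simp only [MvPowerSeries.coeff_one, MvPowerSeries.coeff_monomial, mul_one, hw00] at this
        simpa [Finsupp.ext_iff, Fin.forall_fin_two, Finsupp.single_apply] using this
      have e1 : cc 1 = 0 := by
        have := low_coeff_of_mem hccN (n := Finsupp.single (0 : Fin 2) 1)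
          (by simp [Finsupp.single_apply]) (by simp [Finsupp.single_apply])
        rw [hsum, Fin.sum_univ_five] at this
        simp only [hu, Matrix.cons_val_zero, Matrix.cons_val_one, Matrix.head_cons,
          Matrix.cons_val_two, Matrix.tail_cons, Matrix.cons_val_three,
          Matrix.cons_val_four] at this
        rw [MvPowerSeries.X_def, MvPowerSeries.X_def, MvPowerSeries.monomial_mul_monomial]
          at this
        simp only [MvPowerSeries.coeff_one, MvPowerSeries.coeff_monomial, mul_one, hw10] at this
        simpa [Finsupp.ext_iff, Fin.forall_fin_two, Finsupp.single_apply] using this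
      have e2 : cc 2 = 0 := by
        have := low_coeff_of_mem hccN (n := Finsupp.single (1 : Fin 2) 1)
          (by simp [Finsupp.single_apply]) (by simp [Finsupp.single_apply])
        rw [hsum, Fin.sum_univ_five] at this
        simp only [hu, Matrix.cons_val_zero, Matrix.cons_val_one, Matrix.head_cons,
          Matrix.cons_val_two, Matrix.tail_cons, Matrix.cons_val_three,
          Matrix.cons_val_four] at this
        rw [MvPowerSeries.X_def, MvPowerSeries.X_def, MvPowerSeries.monomial_mul_monomial]
          at this
        simp only [MvPowerSeries.coeff_one, MvPowerSeries.coeff_monomial, mul_one, hw01] at this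
        simpa [Finsupp.ext_iff, Fin.forall_fin_two, Finsupp.single_apply] using this
      have e3 : cc 3 = 0 := by
        have := low_coeff_of_mem hccN
          (n := Finsupp.single (0 : Fin 2) 1 + Finsupp.single (1 : Fin 2) 1)
          (by simp [Finsupp.single_apply]) (by simp [Finsupp.single_apply])
        rw [hsum, Fin.sum_univ_five] at this
        simp only [hu, Matrix.cons_val_zero, Matrix.cons_val_one, Matrix.head_cons,
          Matrix.cons_val_two, Matrix.tail_cons, Matrix.cons_val_three,
          Matrix.cons_val_four] at this
        rw [MvPowerSeries.X_def, MvPowerSeries.X_def, MvPowerSeries.monomial_mul_monomial]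
          at this
        simp only [MvPowerSeries.coeff_one, MvPowerSeries.coeff_monomial, mul_one, hw11] at this
        simpa [Finsupp.ext_iff, Fin.forall_fin_two, Finsupp.single_apply] using this
      have e4 : cc 4 = 0 := by
        by_contra h4
        apply hwJ
        have hsum4 : (∑ i, cc i • u i) = cc 4 • w := by
          rw [Fin.sum_univ_five, e0, e1, e2, e3]
          simp [hu]
        rw [hsum4] at hcc
        have : w = (cc 4)⁻¹ • (cc 4 • w) := by
          rw [smul_smul, inv_mul_cancel₀ h4, one_smul]
        rw [this, MvPowerSeries.smul_eq_C_mul]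
        exact Ideal.mul_mem_left _ _ hcc
      intro i
      fin_cases i
      · exact e0
      · exact e1
      · exact e2
      · exact e3
      · exact e4
    have h5 := hli.cardinal_lift_le_rank
    rw [Cardinal.mk_fin] at h5
    simp only [Cardinal.lift_natCast] at h5
    have h5' : ((5 : ℕ) : Cardinal) ≤ Module.rank k (MvPowerSeries (Fin 2) k ⧸ J) := by
      simpa using h5
    have : ((5 : ℕ) : Cardinal) ≤ 4 := h5'.trans hrank
    norm_num at this
  exact ⟨⟨h12, h21⟩, h23, h32⟩
end

section
/- Let k be a field of characteristic 2, and let γ* : k[u₁, v₁, u₂, v₂, w, y] → k[x₁, x₂, z] be the k-algebra homomorphism determined by γ*(u₁) = x₁², γ*(v₁) = x₁z, γ*(u₂) = x₂², γ*(v₂) = x₂z, γ*(w) = x₁x₂z, γ*(y) = z. Then the kernel of γ* is the ideal of k[u₁, v₁, u₂, v₂, w, y] generated by the six polynomials u₁y² + v₁², u₂y² + v₂², w v₁ + u₁ v₂ y, w v₂ + u₂ v₁ y, v₁ v₂ + w y, and w² + u₁ u₂ y². -/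
open MvPolynomial Finsupp

/-- The `k`-algebra homomorphism
`γ* : k[u₁, v₁, u₂, v₂, w, y] → k[x₁, x₂, z]` given by
`u₁ ↦ x₁²`, `v₁ ↦ x₁z`, `u₂ ↦ x₂²`, `v₂ ↦ x₂z`, `w ↦ x₁x₂z`, `y ↦ z`.
The six source variables `u₁, v₁, u₂, v₂, w, y` are encoded as
`X 0, X 1, X 2, X 3, X 4, X 5 : MvPolynomial (Fin 6) k`, and the target
variables `x₁, x₂, z` as `X 0, X 1, X 2 : MvPolynomial (Fin 3) k`. -/
noncomputable def gammaStar (k : Type*) [Field k] :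
    MvPolynomial (Fin 6) k →ₐ[k] MvPolynomial (Fin 3) k :=
  MvPolynomial.aeval
    ![(X 0) ^ 2, X 0 * X 2, (X 1) ^ 2, X 1 * X 2, X 0 * X 1 * X 2, X 2]

@[simp] lemma cons_val_five {α : Type*} (a : α) (s : Fin 5 → α) :
    Matrix.vecCons a s 5 = s 4 := rfl

noncomputable def Efun (n : Fin 6 →₀ ℕ) : Fin 3 →₀ ℕ :=
  Finsupp.equivFunOnFinite.symm
    ![2 * n 0 + n 1 + n 4, 2 * n 2 + n 3 + n 4, n 1 + n 3 + n 4 + n 5]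

noncomputable def Dfun (m : Fin 3 →₀ ℕ) : Fin 6 →₀ ℕ :=
  Finsupp.equivFunOnFinite.symm
    ![m 0 / 2, (m 0 % 2 + (1 - m 1 % 2)) / 2, m 1 / 2,
      (m 1 % 2 + (1 - m 0 % 2)) / 2, (m 0 % 2 + m 1 % 2) / 2,
      m 2 - (m 0 % 2 + m 1 % 2 + 1) / 2]

lemma Dfun_Efun (n : Fin 6 →₀ ℕ) (h : n 1 + n 3 + n 4 ≤ 1) : Dfun (Efun n) = n := by
  ext i; fin_cases i <;> simp [Dfun, Efun] <;> omega


lemma gammaStar_monomial {k : Type*} [Field k] (n : Fin 6 →₀ ℕ) (c : k) :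
    gammaStar k (monomial n c) = monomial (Efun n) c := by
  rw [gammaStar, aeval_monomial, monomial_eq,
    Finsupp.prod_fintype _ _ (fun i => pow_zero _),
    Finsupp.prod_fintype _ _ (fun i => pow_zero _)]
  rw [Fin.prod_univ_six, Fin.prod_univ_three]
  simp only [Matrix.cons_val_zero, Matrix.cons_val_one, Matrix.head_cons,
    Matrix.cons_val_two, Matrix.tail_cons, Matrix.cons_val_three,
    Matrix.cons_val_four, cons_val_five, Efun,
    Finsupp.coe_equivFunOnFinite_symm, algebraMap_eq]
  ring

lemma gammaStar_eq {k : Type*} [Field k] (f : MvPolynomial (Fin 6) k) :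
    gammaStar k f = AddMonoidAlgebra.mapDomain Efun f := by
  induction f using MvPolynomial.induction_on' with
  | monomial n c =>
    rw [gammaStar_monomial, ← single_eq_monomial, ← single_eq_monomial,
      AddMonoidAlgebra.mapDomain_single]
  | add p q hp hq => rw [map_add, hp, hq, AddMonoidAlgebra.mapDomain_add]

lemma step {k : Type*} [Field k] {I : Ideal (MvPolynomial (Fin 6) k)}
    {a b n : Fin 6 →₀ ℕ}
    (hg : (monomial a 1 : MvPolynomial (Fin 6) k) + monomial b 1 ∈ I) (h : a ≤ n) :
    (monomial n 1 : MvPolynomial (Fin 6) k) + monomial (n - a + b) 1 ∈ I := by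
  have h1 : (monomial n (1 : k) : MvPolynomial (Fin 6) k) + monomial (n - a + b) 1
      = monomial (n - a) 1 * ((monomial a 1) + monomial b 1) := by
    rw [mul_add, monomial_mul, monomial_mul, one_mul, tsub_add_cancel_of_le h]
  rw [h1]
  exact Ideal.mul_mem_left _ _ hg

set_option maxHeartbeats 2000000 in
lemma key {k : Type*} [Field k] [CharP k 2] {I : Ideal (MvPolynomial (Fin 6) k)}
    (hg1 : (monomial (single 1 2) 1 : MvPolynomial (Fin 6) k)
      + monomial (single 0 1 + single 5 2) 1 ∈ I)
    (hg2 : (monomial (single 3 2) 1 : MvPolynomial (Fin 6) k)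
      + monomial (single 2 1 + single 5 2) 1 ∈ I)
    (hg3 : (monomial (single 4 1 + single 1 1) 1 : MvPolynomial (Fin 6) k)
      + monomial (single 0 1 + single 3 1 + single 5 1) 1 ∈ I)
    (hg4 : (monomial (single 4 1 + single 3 1) 1 : MvPolynomial (Fin 6) k)
      + monomial (single 2 1 + single 1 1 + single 5 1) 1 ∈ I)
    (hg5 : (monomial (single 1 1 + single 3 1) 1 : MvPolynomial (Fin 6) k)
      + monomial (single 4 1 + single 5 1) 1 ∈ I)
    (hg6 : (monomial (single 4 2) 1 : MvPolynomial (Fin 6) k)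
      + monomial (single 0 1 + single 2 1 + single 5 2) 1 ∈ I) :
    ∀ (N : ℕ) (n : Fin 6 →₀ ℕ), n 1 + n 3 + n 4 ≤ N →
      (monomial n 1 : MvPolynomial (Fin 6) k) + monomial (Dfun (Efun n)) 1 ∈ I := by
  intro N
  induction N with
  | zero =>
    intro n hn
    rw [Dfun_Efun n (by omega), CharTwo.add_self_eq_zero]
    exact I.zero_mem
  | succ N ih =>
    intro n hn
    by_cases hnorm : n 1 + n 3 + n 4 ≤ 1
    · rw [Dfun_Efun n hnorm, CharTwo.add_self_eq_zero]
      exact I.zero_mem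
    have general : ∀ a b : Fin 6 →₀ ℕ,
        ((monomial a 1 : MvPolynomial (Fin 6) k) + monomial b 1 ∈ I) → a ≤ n →
        (n - a + b) 1 + (n - a + b) 3 + (n - a + b) 4 ≤ N →
        Efun (n - a + b) = Efun n →
        (monomial n 1 : MvPolynomial (Fin 6) k) + monomial (Dfun (Efun n)) 1 ∈ I := by
      intro a b hg hle hm hE
      have hrec := ih (n - a + b) hm
      rw [hE] at hrec
      have hsum := I.add_mem (step hg hle) hrec
      rwa [add_assoc,
        ← add_assoc (monomial (n - a + b) (1 : k) : MvPolynomial (Fin 6) k),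
        CharTwo.add_self_eq_zero, zero_add] at hsum
    by_cases c1 : 2 ≤ n 1
    · refine general _ _ hg1 ?_ ?_ ?_
      · rw [Finsupp.le_def]; intro i; fin_cases i <;>
          simp [Finsupp.single_apply] <;> omega
      · simp only [Finsupp.add_apply, Finsupp.tsub_apply, Finsupp.single_apply]
        simp; omega
      · ext i; fin_cases i <;>
          simp [Efun, Finsupp.tsub_apply, Finsupp.add_apply, Finsupp.single_apply] <;>
          omega
    by_cases c2 : 2 ≤ n 3
    · refine general _ _ hg2 ?_ ?_ ?_
      · rw [Finsupp.le_def]; intro i; fin_cases i <;>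
          simp [Finsupp.single_apply] <;> omega
      · simp only [Finsupp.add_apply, Finsupp.tsub_apply, Finsupp.single_apply]
        simp; omega
      · ext i; fin_cases i <;>
          simp [Efun, Finsupp.tsub_apply, Finsupp.add_apply, Finsupp.single_apply] <;>
          omega
    by_cases c3 : 2 ≤ n 4
    · refine general _ _ hg6 ?_ ?_ ?_
      · rw [Finsupp.le_def]; intro i; fin_cases i <;>
          simp [Finsupp.single_apply] <;> omega
      · simp only [Finsupp.add_apply, Finsupp.tsub_apply, Finsupp.single_apply]
        simp; omega
      · ext i; fin_cases i <;>
          simp [Efun, Finsupp.tsub_apply, Finsupp.add_apply, Finsupp.single_apply] <;>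
          omega
    by_cases c4 : 1 ≤ n 1 ∧ 1 ≤ n 3
    · refine general _ _ hg5 ?_ ?_ ?_
      · rw [Finsupp.le_def]; intro i; fin_cases i <;>
          simp [Finsupp.single_apply] <;> omega
      · simp only [Finsupp.add_apply, Finsupp.tsub_apply, Finsupp.single_apply]
        simp; omega
      · ext i; fin_cases i <;>
          simp [Efun, Finsupp.tsub_apply, Finsupp.add_apply, Finsupp.single_apply] <;>
          omega
    by_cases c5 : 1 ≤ n 1 ∧ 1 ≤ n 4
    · refine general _ _ hg3 ?_ ?_ ?_
      · rw [Finsupp.le_def]; intro i; fin_cases i <;>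
          simp [Finsupp.single_apply] <;> omega
      · simp only [Finsupp.add_apply, Finsupp.tsub_apply, Finsupp.single_apply]
        simp; omega
      · ext i; fin_cases i <;>
          simp [Efun, Finsupp.tsub_apply, Finsupp.add_apply, Finsupp.single_apply] <;>
          omega
    refine general _ _ hg4 ?_ ?_ ?_
    · rw [Finsupp.le_def]; intro i; fin_cases i <;>
        simp [Finsupp.single_apply] <;> omega
    · simp only [Finsupp.add_apply, Finsupp.tsub_apply, Finsupp.single_apply]
      simp; omega
    · ext i; fin_cases i <;>
        simp [Efun, Finsupp.tsub_apply, Finsupp.add_apply, Finsupp.single_apply] <;>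
        omega

set_option maxHeartbeats 1000000 in
/-- In characteristic `2`, the kernel of `γ*` is generated by the six polynomials
`u₁y² + v₁²`, `u₂y² + v₂²`, `wv₁ + u₁v₂y`, `wv₂ + u₂v₁y`, `v₁v₂ + wy`,
`w² + u₁u₂y²`. -/
theorem ker_gammaStar {k : Type*} [Field k] [CharP k 2] :
    RingHom.ker (gammaStar k) =
      Ideal.span ({
        X 0 * (X 5) ^ 2 + (X 1) ^ 2,
        X 2 * (X 5) ^ 2 + (X 3) ^ 2,
        X 4 * X 1 + X 0 * X 3 * X 5,
        X 4 * X 3 + X 2 * X 1 * X 5,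
        X 1 * X 3 + X 4 * X 5,
        (X 4) ^ 2 + X 0 * X 2 * (X 5) ^ 2} : Set (MvPolynomial (Fin 6) k)) := by
  have monX : ∀ i : Fin 6, (monomial (single i 1) 1 : MvPolynomial (Fin 6) k) = X i :=
    fun _ => rfl
  apply le_antisymm
  · intro f hf
    rw [RingHom.mem_ker] at hf
    set I := Ideal.span ({
        X 0 * (X 5) ^ 2 + (X 1) ^ 2,
        X 2 * (X 5) ^ 2 + (X 3) ^ 2,
        X 4 * X 1 + X 0 * X 3 * X 5,
        X 4 * X 3 + X 2 * X 1 * X 5,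
        X 1 * X 3 + X 4 * X 5,
        (X 4) ^ 2 + X 0 * X 2 * (X 5) ^ 2} : Set (MvPolynomial (Fin 6) k)) with hI
    have e1 : (monomial (single 1 2) 1 : MvPolynomial (Fin 6) k)
        + monomial (single 0 1 + single 5 2) 1 ∈ I := by
      have h : X 0 * (X 5:MvPolynomial (Fin 6) k) ^ 2 + (X 1) ^ 2 ∈ I := by
        rw [hI]; exact Ideal.subset_span (by simp)
      convert h using 1
      try simp only [X_pow_eq_monomial]
      simp only [← monX]; simp only [monomial_mul, one_mul]
      rw [add_comm]
    have e2 : (monomial (single 3 2) 1 : MvPolynomial (Fin 6) k)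
        + monomial (single 2 1 + single 5 2) 1 ∈ I := by
      have h : X 2 * (X 5:MvPolynomial (Fin 6) k) ^ 2 + (X 3) ^ 2 ∈ I := by
        rw [hI]; exact Ideal.subset_span (by simp)
      convert h using 1
      try simp only [X_pow_eq_monomial]
      simp only [← monX]; simp only [monomial_mul, one_mul]
      rw [add_comm]
    have e3 : (monomial (single 4 1 + single 1 1) 1 : MvPolynomial (Fin 6) k)
        + monomial (single 0 1 + single 3 1 + single 5 1) 1 ∈ I := by
      have h : (X 4 * X 1 + X 0 * X 3 * X 5 : MvPolynomial (Fin 6) k) ∈ I := by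
        rw [hI]; exact Ideal.subset_span (by simp)
      convert h using 1
      try simp only [X_pow_eq_monomial]
      simp only [← monX]; simp only [monomial_mul, one_mul]
    have e4 : (monomial (single 4 1 + single 3 1) 1 : MvPolynomial (Fin 6) k)
        + monomial (single 2 1 + single 1 1 + single 5 1) 1 ∈ I := by
      have h : (X 4 * X 3 + X 2 * X 1 * X 5 : MvPolynomial (Fin 6) k) ∈ I := by
        rw [hI]; exact Ideal.subset_span (by simp)
      convert h using 1
      try simp only [X_pow_eq_monomial]
      simp only [← monX]; simp only [monomial_mul, one_mul]
    have e5 : (monomial (single 1 1 + single 3 1) 1 : MvPolynomial (Fin 6) k)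
        + monomial (single 4 1 + single 5 1) 1 ∈ I := by
      have h : (X 1 * X 3 + X 4 * X 5 : MvPolynomial (Fin 6) k) ∈ I := by
        rw [hI]; exact Ideal.subset_span (by simp)
      convert h using 1
      try simp only [X_pow_eq_monomial]
      simp only [← monX]; simp only [monomial_mul, one_mul]
    have e6 : (monomial (single 4 2) 1 : MvPolynomial (Fin 6) k)
        + monomial (single 0 1 + single 2 1 + single 5 2) 1 ∈ I := by
      have h : ((X 4)^2 + X 0 * X 2 * (X 5)^2 : MvPolynomial (Fin 6) k) ∈ I := by
        rw [hI]; exact Ideal.subset_span (by simp)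
      convert h using 1
      try simp only [X_pow_eq_monomial]
      simp only [← monX]; simp only [monomial_mul, one_mul]
    have monKey := key e1 e2 e3 e4 e5 e6
    obtain ⟨T, hT⟩ : ∃ T : MvPolynomial (Fin 6) k,
        T = AddMonoidAlgebra.mapDomain (fun n => Dfun (Efun n)) f := ⟨_, rfl⟩
    have hT0 : T = 0 := by
      rw [gammaStar_eq] at hf
      rw [hT, show AddMonoidAlgebra.mapDomain (fun n => Dfun (Efun n)) f
          = AddMonoidAlgebra.mapDomain Dfun (AddMonoidAlgebra.mapDomain Efun f) by
          simp only [AddMonoidAlgebra.mapDomain, AddMonoidAlgebra.coeff_ofCoeff]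
          rw [← Finsupp.mapDomain_comp]; rfl,
        hf, AddMonoidAlgebra.mapDomain_zero]
    have hTsum : T = ∑ n ∈ f.support,
        (monomial (Dfun (Efun n)) (coeff n f) : MvPolynomial (Fin 6) k) := by
      rw [hT, AddMonoidAlgebra.mapDomain, Finsupp.mapDomain]
      simp only [Finsupp.sum, AddMonoidAlgebra.ofCoeff_sum, AddMonoidAlgebra.ofCoeff_single,
        single_eq_monomial]
      rfl
    have hrep : f + T
        = ∑ n ∈ f.support, ((monomial n (coeff n f) : MvPolynomial (Fin 6) k)
            + monomial (Dfun (Efun n)) (coeff n f)) := by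
      conv_lhs => rw [f.as_sum, hTsum]
      rw [← Finset.sum_add_distrib]
    have hmem : f + T ∈ I := by
      rw [hrep]
      refine Ideal.sum_mem _ (fun n _ => ?_)
      have hc : (monomial n (coeff n f) : MvPolynomial (Fin 6) k)
          + monomial (Dfun (Efun n)) (coeff n f)
          = C (coeff n f) * ((monomial n 1) + monomial (Dfun (Efun n)) 1) := by
        rw [mul_add, C_mul_monomial, C_mul_monomial, mul_one]
      rw [hc]
      exact Ideal.mul_mem_left _ _ (monKey (n 1 + n 3 + n 4) n le_rfl)
    rwa [hT0, add_zero] at hmem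
  · rw [Ideal.span_le]
    rintro p hp
    simp only [Set.mem_insert_iff, Set.mem_singleton_iff] at hp
    rcases hp with rfl|rfl|rfl|rfl|rfl|rfl <;>
      · simp only [SetLike.mem_coe, RingHom.mem_ker, map_add, map_mul, map_pow,
          gammaStar, aeval_X, Matrix.cons_val_zero, Matrix.cons_val_one,
          Matrix.head_cons, Matrix.cons_val_two, Matrix.tail_cons,
          Matrix.cons_val_three, Matrix.cons_val_four, cons_val_five]
        ring_nf
        simp [CharTwo.two_eq_zero]
end
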